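/- arXiv:0810.1936 — 7 statements merged into one kernel-verified Lean document; each statement's English description precedes it below -/
import Mathlib

section
/- Let n ≥ 3, let P be a free ℤ-module of rank n − 2 with a symmetric ℤ-bilinear form ⟨·,·⟩, and let A : ZMod n → P be a family satisfying conditions (i) and (ii) of an abstract toric system. Then for every i ∈ ZMod n, the family of n − 2 elements (A_j)_{j ∈ ZMod n, j ∉ {i, i+1}} is a ℤ-basis of P. -/
private lemma zmod_natCast_inj {n a b : ℕ} (ha : a < n) (hb : b < n)
    (h : (a : ZMod n) = b) : a = b := by
  have := congrArg ZMod.val h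
  rwa [ZMod.val_cast_of_lt ha, ZMod.val_cast_of_lt hb] at this

/-- For a family `A : ZMod n → P` satisfying conditions (i) and (ii) of an
abstract toric system in a free `ℤ`-module `P` of rank `n - 2` with a symmetric bilinear form,
for every `i` the family `(A j)_{j ≠ i, j ≠ i + 1}` of `n - 2` elements is a `ℤ`-basis of `P`. -/
theorem abstract_toric_system_complement_basis
    (n : ℕ) (hn : 3 ≤ n) [NeZero n]
    (P : Type*) [AddCommGroup P] [Module ℤ P] [Module.Free ℤ P]
    (hrank : Module.finrank ℤ P = n - 2)
    (B : P →ₗ[ℤ] P →ₗ[ℤ] ℤ) (hsymm : ∀ x y : P, B x y = B y x)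
    (A : ZMod n → P)
    (h1 : ∀ i : ZMod n, B (A i) (A (i + 1)) = 1)
    (h2 : ∀ i j : ZMod n, j ≠ i - 1 → j ≠ i → j ≠ i + 1 → B (A i) (A j) = 0) :
    ∀ i : ZMod n, ∃ b : Module.Basis {j : ZMod n // j ≠ i ∧ j ≠ i + 1} ℤ P,
      ∀ j : {j : ZMod n // j ≠ i ∧ j ≠ i + 1}, b j = A j.1 := by
  letI u : Unique (Module ℤ P) := AddCommGroup.uniqueIntModule
  obtain rfl : ‹Module ℤ P› = AddCommGroup.toIntModule P := Subsingleton.elim _ _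
  intro i
  set m := n - 2 with hm
  haveI : Module.Finite ℤ P := Module.finite_of_finrank_pos (by omega)
  -- the candidate family, the dual functionals, and the Gram-type matrix
  set v : Fin m → P := fun t => A (i + 2 + (t.val : ZMod n)) with hv
  set M : Matrix (Fin m) (Fin m) ℤ :=
    fun s t => B (A (i + 1 + (s.val : ZMod n))) (A (i + 2 + (t.val : ZMod n))) with hM
  set g : P →ₗ[ℤ] (Fin m → ℤ) :=
    LinearMap.pi (fun s : Fin m => B (A (i + 1 + (s.val : ZMod n)))) with hg
  set f : (Fin m → ℤ) →ₗ[ℤ] P := Fintype.linearCombination ℤ v with hf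
  -- diagonal entries are 1
  have hdiag : ∀ s : Fin m, M s s = 1 := by
    intro s
    have h' : i + 2 + (s.val : ZMod n) = (i + 1 + (s.val : ZMod n)) + 1 := by ring
    rw [hM]; dsimp only; rw [h']; exact h1 _
  -- entries strictly above the diagonal vanish
  have hlow : ∀ s t : Fin m, s < t → M s t = 0 := by
    intro s t hst
    have hsv : s.val < m := s.isLt
    have htv : t.val < m := t.isLt
    have hstv : s.val < t.val := hst
    apply h2
    · intro h
      have h' : i + ((t.val : ZMod n) + 2) = i + ((s.val : ZMod n) + 0) := by
        calc i + ((t.val : ZMod n) + 2) = i + 2 + (t.val : ZMod n) := by ring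
          _ = i + 1 + (s.val : ZMod n) - 1 := h
          _ = i + ((s.val : ZMod n) + 0) := by ring
      have h'' := add_left_cancel h'
      have h3 : ((t.val + 2 : ℕ) : ZMod n) = ((s.val : ℕ) : ZMod n) := by
        push_cast
        rw [h'']; ring
      have := zmod_natCast_inj (by omega) (by omega) h3
      omega
    · intro h
      have h' : i + ((t.val : ZMod n) + 2) = i + ((s.val : ZMod n) + 1) := by
        calc i + ((t.val : ZMod n) + 2) = i + 2 + (t.val : ZMod n) := by ring
          _ = i + 1 + (s.val : ZMod n) := h
          _ = i + ((s.val : ZMod n) + 1) := by ring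
      have h'' := add_left_cancel h'
      have h3 : ((t.val + 2 : ℕ) : ZMod n) = ((s.val + 1 : ℕ) : ZMod n) := by
        push_cast; rw [h'']
      have := zmod_natCast_inj (by omega) (by omega) h3
      omega
    · intro h
      have h' : i + ((t.val : ZMod n) + 2) = i + ((s.val : ZMod n) + 2) := by
        calc i + ((t.val : ZMod n) + 2) = i + 2 + (t.val : ZMod n) := by ring
          _ = i + 1 + (s.val : ZMod n) + 1 := h
          _ = i + ((s.val : ZMod n) + 2) := by ring
      have h'' := add_left_cancel h'
      have h3 : ((t.val + 2 : ℕ) : ZMod n) = ((s.val + 2 : ℕ) : ZMod n) := by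
        push_cast; rw [h'']
      have := zmod_natCast_inj (by omega) (by omega) h3
      omega
  -- the matrix is invertible
  have hdet : IsUnit M.det := by
    have hbt : M.BlockTriangular OrderDual.toDual := by
      intro a b hab
      exact hlow a b hab
    rw [Matrix.det_of_lowerTriangular M hbt]
    simp only [hdiag, Finset.prod_const_one]
    exact isUnit_one
  -- g of a linear combination is matrix-vector multiplication
  have key : ∀ c : Fin m → ℤ, g (f c) = M.mulVec c := by
    intro c
    rw [hf, Fintype.linearCombination_apply]
    funext s
    rw [map_sum]
    simp only [hg, LinearMap.pi_apply, Finset.sum_apply, LinearMap.map_smul, smul_eq_mul,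
      Matrix.mulVec, dotProduct, hM]
    exact Finset.sum_congr rfl fun t _ => mul_comm _ _
  have hMinj : ∀ c : Fin m → ℤ, M.mulVec c = 0 → c = 0 := by
    intro c hc
    have h' : M⁻¹.mulVec (M.mulVec c) = c := by
      rw [Matrix.mulVec_mulVec, Matrix.nonsing_inv_mul M hdet, Matrix.one_mulVec]
    rw [hc, Matrix.mulVec_zero] at h'
    exact h'.symm
  -- linear independence
  have LI : LinearIndependent ℤ v := by
    rw [Fintype.linearIndependent_iff]
    intro c hc t
    have h0 : M.mulVec c = 0 := by
      rw [← key c]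
      exact (congrArg g hc).trans (map_zero g)
    exact congrFun (hMinj c h0) t
  -- the kernel of g is trivial, by a rank argument
  have hker : ∀ x : P, g x = 0 → x = 0 := by
    intro x hx
    by_contra hx0
    have LI2 : LinearIndependent ℤ (fun o : Option (Fin m) => Option.elim o x v) := by
      rw [Fintype.linearIndependent_iff]
      intro c hc
      rw [Fintype.sum_option] at hc
      simp only [Option.elim_none, Option.elim_some] at hc
      have hgc0 := (congrArg g hc).trans (map_zero g)
      rw [map_add, g.map_smul, hx, smul_zero, zero_add] at hgc0
      have hgc : M.mulVec (fun t => c (some t)) = 0 := by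
        rw [← key (fun t => c (some t))]
        exact hgc0
      have hsome : ∀ t, c (some t) = 0 := fun t => by
        simpa using congrFun (hMinj _ hgc) t
      simp only [hsome, zero_smul, Finset.sum_const_zero, add_zero] at hc
      have hnone : c none = 0 := by
        rcases smul_eq_zero.mp hc with h | h
        · exact h
        · exact absurd h hx0
      intro o
      cases o with
      | none => exact hnone
      | some t => exact hsome t
    have hcard := LI2.fintype_card_le_finrank
    simp only [Fintype.card_option, Fintype.card_fin, hrank] at hcard
    omega
  -- spanning
  have hspan : ⊤ ≤ Submodule.span ℤ (Set.range v) := by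
    intro p _
    set c : Fin m → ℤ := M⁻¹.mulVec (g p) with hc
    have hgq : g (f c - p) = 0 := by
      rw [map_sub, key c, hc, Matrix.mulVec_mulVec, Matrix.mul_nonsing_inv M hdet,
        Matrix.one_mulVec, sub_self]
    have hpq : p = f c := (sub_eq_zero.mp (hker _ hgq)).symm
    have hmem : f c ∈ Submodule.span ℤ (Set.range v) := by
      rw [← Fintype.range_linearCombination ℤ v]
      exact LinearMap.mem_range_self _ c
    rw [hpq]
    exact hmem
  -- the index equivalence
  have hφmem : ∀ t : Fin m,
      (i + 2 + (t.val : ZMod n)) ≠ i ∧ (i + 2 + (t.val : ZMod n)) ≠ i + 1 := by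
    intro t
    have htv : t.val < m := t.isLt
    constructor
    · intro h
      have h' : i + ((t.val : ZMod n) + 2) = i + 0 := by
        calc i + ((t.val : ZMod n) + 2) = i + 2 + (t.val : ZMod n) := by ring
          _ = i := h
          _ = i + 0 := by ring
      have h'' := add_left_cancel h'
      have h3 : ((t.val + 2 : ℕ) : ZMod n) = ((0 : ℕ) : ZMod n) := by
        push_cast; rw [h'']
      have := zmod_natCast_inj (by omega) (by omega) h3
      omega
    · intro h
      have h' : i + ((t.val : ZMod n) + 2) = i + 1 := by
        calc i + ((t.val : ZMod n) + 2) = i + 2 + (t.val : ZMod n) := by ring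
          _ = i + 1 := h
      have h'' := add_left_cancel h'
      have h3 : ((t.val + 2 : ℕ) : ZMod n) = ((1 : ℕ) : ZMod n) := by
        push_cast; rw [h'']
      have := zmod_natCast_inj (by omega) (by omega) h3
      omega
  set φ : Fin m → {j : ZMod n // j ≠ i ∧ j ≠ i + 1} :=
    fun t => ⟨i + 2 + (t.val : ZMod n), hφmem t⟩ with hφ
  have hφbij : Function.Bijective φ := by
    constructor
    · intro t₁ t₂ h
      have h' : i + 2 + (t₁.val : ZMod n) = i + 2 + (t₂.val : ZMod n) :=
        congrArg Subtype.val h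
      have h'' := add_left_cancel h'
      exact Fin.ext (zmod_natCast_inj (by omega) (by omega) h'')
    · rintro ⟨j, hj1, hj2⟩
      set d := (j - (i + 2)).val with hd
      have hdn : d < n := ZMod.val_lt _
      have hdc : ((d : ℕ) : ZMod n) = j - (i + 2) := ZMod.natCast_zmod_val _
      have hn2 : ((n - 2 : ℕ) : ZMod n) = -2 := by
        rw [Nat.cast_sub (by omega), ZMod.natCast_self]
        push_cast; ring
      have hn1 : ((n - 1 : ℕ) : ZMod n) = -1 := by
        rw [Nat.cast_sub (by omega), ZMod.natCast_self]
        push_cast; ring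
      have hd2 : d ≠ n - 2 := by
        intro h
        apply hj1
        have heq : j - (i + 2) = -2 := by rw [← hdc, h, hn2]
        have := sub_eq_iff_eq_add.mp heq
        rw [this]; ring
      have hd1 : d ≠ n - 1 := by
        intro h
        apply hj2
        have heq : j - (i + 2) = -1 := by rw [← hdc, h, hn1]
        have := sub_eq_iff_eq_add.mp heq
        rw [this]; ring
      have hdm : d < m := by omega
      refine ⟨⟨d, hdm⟩, ?_⟩
      apply Subtype.ext
      show i + 2 + ((d : ℕ) : ZMod n) = j
      rw [hdc]; ring
  set e : Fin m ≃ {j : ZMod n // j ≠ i ∧ j ≠ i + 1} := Equiv.ofBijective φ hφbij with he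
  refine ⟨(Module.Basis.mk LI hspan).reindex e, ?_⟩
  intro j
  rw [Module.Basis.reindex_apply, Module.Basis.mk_apply]
  have hj : φ (e.symm j) = j := e.apply_symm_apply j
  calc v (e.symm j) = A (φ (e.symm j)).1 := rfl
    _ = A j.1 := by rw [hj]
end

section
/- Let l : ZMod n → ℤ² be toric fan data with n ≥ 5 and self-intersection numbers a_i. Then there exists i ∈ ZMod n with a_i = −1, equivalently l_{i−1} + l_{i+1} = l_i. (This is the combinatorial content of the statement that every smooth complete toric surface can be obtained by a finite sequence of equivariant blow-ups of ℙ² or a Hirzebruch surface 𝔽_a.) -/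
/-- The determinant of two vectors in `ℤ²`. -/
def det2 (u v : ℤ × ℤ) : ℤ := u.1 * v.2 - u.2 * v.1

/-- Toric fan data: a cyclic family `l : ZMod n → ℤ²` such that each consecutive pair is a
positively oriented `ℤ`-basis of `ℤ²`, and no other `l k` lies in the nonnegative span of a
consecutive pair.  This encodes a smooth complete toric surface. -/
def IsToricFanData (n : ℕ) (l : ZMod n → ℤ × ℤ) : Prop :=
  (∀ i : ZMod n, det2 (l i) (l (i + 1)) = 1) ∧
  (∀ i k : ZMod n, k ≠ i → k ≠ i + 1 →
    ¬ ∃ α β : ℤ, 0 ≤ α ∧ 0 ≤ β ∧ l k = α • l i + β • l (i + 1))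

lemma det2_self (u : ℤ × ℤ) : det2 u u = 0 := by simp [det2]; ring

lemma det2_antisymm (u v : ℤ × ℤ) : det2 u v = - det2 v u := by simp [det2]; ring

lemma det2_rel {A B C : ℤ × ℤ} {c : ℤ} (h : A + c • B + C = 0) (v : ℤ × ℤ) :
    det2 v A + c * det2 v B + det2 v C = 0 := by
  have h1 : A.1 + c * B.1 + C.1 = 0 := by
    have := congrArg Prod.fst h; simpa [smul_eq_mul] using this
  have h2 : A.2 + c * B.2 + C.2 = 0 := by
    have := congrArg Prod.snd h; simpa [smul_eq_mul] using this
  simp only [det2]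
  linear_combination v.1 * h2 - v.2 * h1

lemma det2_rel_left {A B C : ℤ × ℤ} {c : ℤ} (h : A + c • B + C = 0) (v : ℤ × ℤ) :
    det2 A v + c * det2 B v + det2 C v = 0 := by
  have h1 : A.1 + c * B.1 + C.1 = 0 := by
    have := congrArg Prod.fst h; simpa [smul_eq_mul] using this
  have h2 : A.2 + c * B.2 + C.2 = 0 := by
    have := congrArg Prod.snd h; simpa [smul_eq_mul] using this
  simp only [det2]
  linear_combination v.2 * h1 - v.1 * h2

lemma det2_add_right (v x y : ℤ × ℤ) : det2 v (x + y) = det2 v x + det2 v y := by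
  simp [det2]; ring

lemma det2_sub_right (v x y : ℤ × ℤ) : det2 v (x - y) = det2 v x - det2 v y := by
  simp [det2]; ring

lemma det2_smul_right (v : ℤ × ℤ) (c : ℤ) (x : ℤ × ℤ) : det2 v (c • x) = c * det2 v x := by
  simp [det2, smul_eq_mul]; ring

lemma cramer2 {u w : ℤ × ℤ} (h : det2 u w = 1) (z : ℤ × ℤ) :
    z = det2 z w • u + det2 u z • w := by
  have h' : u.1 * w.2 - u.2 * w.1 = 1 := h
  rw [Prod.ext_iff]
  constructor
  · simp only [det2, Prod.fst_add, Prod.smul_fst, smul_eq_mul]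
    linear_combination (-z.1) * h'
  · simp only [det2, Prod.snd_add, Prod.smul_snd, smul_eq_mul]
    linear_combination (-z.2) * h'

lemma keyB {n : ℕ} [NeZero n] {l : ZMod n → ℤ × ℤ} (hl : IsToricFanData n l)
    {a : ZMod n → ℤ} (ha : ∀ i : ZMod n, l (i - 1) + a i • l i + l (i + 1) = 0)
    {k j : ZMod n} (hak : 0 ≤ a k)
    (hj1 : j ≠ k - 1) (hj2 : j ≠ k) (hj3 : j ≠ k + 1) :
    det2 (l j) (l (k + 1)) < 0 ∧ det2 (l (k - 1)) (l j) < 0 := by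
  have hk1 : k - 1 + 1 = k := by ring
  have hdk : det2 (l (k - 1)) (l k) = 1 := by
    have := hl.1 (k - 1); rwa [hk1] at this
  have hr : det2 (l (k - 1)) (l j)
      = det2 (l j) (l (k + 1)) - a k * det2 (l k) (l j) := by
    have h0 := det2_rel_left (ha k) (l j)
    have h1 := det2_antisymm (l (k + 1)) (l j)
    linarith
  have hlj : l j = det2 (l j) (l (k + 1)) • l k + det2 (l k) (l j) • l (k + 1) :=
    cramer2 (hl.1 k) (l j)
  have hlj2 : l j = (- det2 (l k) (l j)) • l (k - 1) + det2 (l (k - 1)) (l j) • l k := by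
    have h2 := cramer2 hdk (l j)
    have h3 : det2 (l j) (l k) = - det2 (l k) (l j) := det2_antisymm _ _
    rw [h3] at h2
    exact h2
  by_cases hq0 : 0 ≤ det2 (l k) (l j)
  · have hp0 : det2 (l j) (l (k + 1)) < 0 := by
      by_contra h
      exact hl.2 k j hj2 hj3 ⟨_, _, le_of_not_gt h, hq0, hlj⟩
    have : 0 ≤ a k * det2 (l k) (l j) := mul_nonneg hak hq0
    exact ⟨hp0, by linarith⟩
  · push_neg at hq0
    have hr0 : det2 (l (k - 1)) (l j) < 0 := by
      by_contra h
      refine hl.2 (k - 1) j hj1 (by rwa [hk1])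
        ⟨- det2 (l k) (l j), det2 (l (k - 1)) (l j), by linarith, le_of_not_gt h, ?_⟩
      rwa [hk1]
    have : a k * det2 (l k) (l j) ≤ 0 := mul_nonpos_of_nonneg_of_nonpos hak (le_of_lt hq0)
    exact ⟨by linarith, hr0⟩

/-- For toric fan data `l : ZMod n → ℤ²` with `n ≥ 5` and self-intersection
numbers `a i`, there exists `i` with `a i = -1`, equivalently `l (i-1) + l (i+1) = l i`
(the surface admits an equivariant blow-down). -/
theorem toric_fan_data_exists_blowdown
    (n : ℕ) (hn : 5 ≤ n) [NeZero n]
    (l : ZMod n → ℤ × ℤ) (hl : IsToricFanData n l)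
    (a : ZMod n → ℤ)
    (ha : ∀ i : ZMod n, l (i - 1) + a i • l i + l (i + 1) = 0) :
    ∃ i : ZMod n, a i = -1 ∧ l (i - 1) + l (i + 1) = l i := by
  have haux : ∀ i, a i = -1 → l (i - 1) + l (i + 1) = l i := by
    intro i h
    have h0 := ha i
    rw [h, neg_one_smul] at h0
    have h1 := congrArg Prod.fst h0
    have h2 := congrArg Prod.snd h0
    simp only [Prod.fst_add, Prod.snd_add, Prod.fst_neg, Prod.snd_neg, Prod.fst_zero,
      Prod.snd_zero] at h1 h2
    rw [Prod.ext_iff]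
    constructor
    · simp only [Prod.fst_add]; linarith
    · simp only [Prod.snd_add]; linarith
  suffices hex : ∃ i, a i = -1 by
    obtain ⟨i, hi⟩ := hex; exact ⟨i, hi, haux i hi⟩
  by_contra hno
  push_neg at hno
  -- cast helper
  have hcast : ∀ s : ℕ, 0 < s → s < n → ((s : ℕ) : ZMod n) ≠ 0 := by
    intro s hs1 hs2 h
    have hv := ZMod.val_cast_of_lt hs2
    rw [h, ZMod.val_zero] at hv
    omega
  -- Step A : find k with 0 ≤ a k
  have hf1 : det2 (l 0) (l 1) = 1 := by
    have := hl.1 0; rwa [zero_add] at this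
  obtain ⟨k₀, -, hk₀⟩ := Finset.exists_max_image (Finset.univ : Finset (ZMod n))
      (fun j => det2 (l 0) (l j)) ⟨0, Finset.mem_univ 0⟩
  obtain ⟨k, hkmem, hkg⟩ := Finset.exists_max_image
      (Finset.univ.filter fun j => det2 (l 0) (l k₀) ≤ det2 (l 0) (l j))
      (fun j => det2 (l 1) (l j)) ⟨k₀, by simp⟩
  simp only [Finset.mem_filter, Finset.mem_univ, true_and] at hkmem hkg
  have hfk : ∀ j, det2 (l 0) (l j) ≤ det2 (l 0) (l k) :=
    fun j => le_trans (hk₀ j (Finset.mem_univ j)) hkmem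
  have hgk : ∀ j, det2 (l 0) (l k) ≤ det2 (l 0) (l j) →
      det2 (l 1) (l j) ≤ det2 (l 1) (l k) :=
    fun j hj => hkg j (le_trans hkmem hj)
  have hM : 1 ≤ det2 (l 0) (l k) := hf1 ▸ hfk 1
  have hsum := det2_rel (ha k) (l 0)
  have hak : 0 ≤ a k := by
    by_contra hneg
    push_neg at hneg
    have h2 : a k ≤ -2 := by have := hno k; omega
    rcases eq_or_lt_of_le h2 with he | hlt
    · -- flat case a k = -2
      have hfm : det2 (l 0) (l (k + 1)) = det2 (l 0) (l k) := by
        have h3 := hfk (k - 1); have h4 := hfk (k + 1)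
        rw [he] at hsum; linarith
      have hz : det2 (l 0) (l (k + 1) - l k) = 0 := by
        rw [det2_sub_right, hfm]; ring
      have hcr := cramer2 hf1 (l (k + 1) - l k)
      rw [hz, zero_smul, add_zero] at hcr
      have hk1 : l (k + 1) = l k + det2 (l (k + 1) - l k) (l 1) • l 0 := by
        rw [← hcr]; abel
      have e1 : (det2 (l (k + 1) - l k) (l 1)) * det2 (l k) (l 0) = 1 := by
        have := hl.1 k
        rw [hk1, det2_add_right, det2_smul_right, det2_self] at this
        linarith
      have hd0 : det2 (l k) (l 0) = - det2 (l 0) (l k) := det2_antisymm _ _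
      have hsf : det2 (l (k + 1) - l k) (l 1) * det2 (l 0) (l k) = -1 := by
        rw [hd0] at e1; linarith
      have hs1 : det2 (l (k + 1) - l k) (l 1) ≤ -1 := by
        by_contra hcon
        push_neg at hcon
        have : 0 ≤ det2 (l (k + 1) - l k) (l 1) := by omega
        nlinarith
      have hse : det2 (l (k + 1) - l k) (l 1) = -1 := by nlinarith
      have hgrow : det2 (l 1) (l (k + 1)) = det2 (l 1) (l k) + 1 := by
        rw [hk1, det2_add_right, det2_smul_right, hse]
        have : det2 (l 1) (l 0) = -1 := by rw [det2_antisymm, hf1]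
        rw [this]; ring
      have := hgk (k + 1) (le_of_eq hfm.symm)
      linarith
    · -- a k ≤ -3
      have h3 := hfk (k - 1); have h4 := hfk (k + 1)
      nlinarith
  -- Step C
  set m := n - 2 with hm
  have hm3 : 3 ≤ m := by omega
  -- C1 : all interior self-intersections ≤ -2
  have hC1 : ∀ t : ℕ, 1 ≤ t → t ≤ n - 3 → a (k + 1 + (t : ZMod n)) ≤ -2 := by
    intro t ht1 ht2
    by_cases hx1 : t = 1
    · subst hx1
      have hj2 : k + 1 + ((1 : ℕ) : ZMod n) = k + 2 := by push_cast; ring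
      have hi1 : k + 3 ≠ k - 1 := fun h =>
        hcast 4 (by omega) (by omega) (by push_cast; linear_combination h)
      have hi2 : k + 3 ≠ k := fun h =>
        hcast 3 (by omega) (by omega) (by push_cast; linear_combination h)
      have hi3 : k + 3 ≠ k + 1 := fun h =>
        hcast 2 (by omega) (by omega) (by push_cast; linear_combination h)
      have hB := (keyB hl ha hak hi1 hi2 hi3).1
      have h0 := ha (k + 2)
      rw [show k + 2 - 1 = k + 1 by ring, show k + 2 + 1 = k + 3 by ring] at h0
      have hrel := det2_rel_left h0 (l (k + 1))
      have hs := det2_self (l (k + 1))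
      have hd : det2 (l (k + 2)) (l (k + 1)) = -1 := by
        have := hl.1 (k + 1)
        rw [show k + 1 + 1 = k + 2 by ring] at this
        rw [det2_antisymm, this]
      rw [hj2]
      rw [hs, hd] at hrel
      have := hno (k + 2)
      have : a (k + 2) < 0 := by linarith
      have := hno (k + 2)
      omega
    · by_cases hx2 : t = n - 3
      · -- j = k - 2
        have hj2 : k + 1 + ((t : ℕ) : ZMod n) = k - 2 := by
          subst hx2
          have : ((n - 3 : ℕ) : ZMod n) = -3 := by
            rw [Nat.cast_sub (by omega : 3 ≤ n), ZMod.natCast_self]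
            push_cast; ring
          rw [this]; ring
        have hi1 : k - 3 ≠ k - 1 := fun h =>
          hcast 2 (by omega) (by omega) (by push_cast; linear_combination -h)
        have hi2 : k - 3 ≠ k := fun h =>
          hcast 3 (by omega) (by omega) (by push_cast; linear_combination -h)
        have hi3 : k - 3 ≠ k + 1 := fun h =>
          hcast 4 (by omega) (by omega) (by push_cast; linear_combination -h)
        have hB := (keyB hl ha hak hi1 hi2 hi3).2
        have h0 := ha (k - 2)
        rw [show k - 2 - 1 = k - 3 by ring, show k - 2 + 1 = k - 1 by ring] at h0
        have hrel := det2_rel_left h0 (l (k - 1))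
        have hs := det2_self (l (k - 1))
        have hd : det2 (l (k - 2)) (l (k - 1)) = 1 := by
          have := hl.1 (k - 2)
          rwa [show k - 2 + 1 = k - 1 by ring] at this
        have hanti := det2_antisymm (l (k - 1)) (l (k - 3))
        rw [hj2]
        rw [hs, hd] at hrel
        have : a (k - 2) < 0 := by linarith
        have := hno (k - 2)
        omega
      · -- general interior case : 2 ≤ t ≤ n - 4
        have ht2' : 2 ≤ t := by omega
        have ht4 : t ≤ n - 4 := by omega
        by_contra hge
        push_neg at hge
        have haj : 0 ≤ a (k + 1 + (t : ZMod n)) := by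
          have := hno (k + 1 + (t : ZMod n)); omega
        have hi1 : k + 1 ≠ k + 1 + (t : ZMod n) - 1 := fun h =>
          hcast (t - 1) (by omega) (by omega)
            (by push_cast [Nat.cast_sub (by omega : 1 ≤ t)]; linear_combination -h)
        have hi2 : k + 1 ≠ k + 1 + (t : ZMod n) := fun h =>
          hcast t (by omega) (by omega) (by linear_combination -h)
        have hi3 : k + 1 ≠ k + 1 + (t : ZMod n) + 1 := fun h =>
          hcast (t + 1) (by omega) (by omega) (by push_cast; linear_combination -h)
        have hBj := (keyB hl ha haj hi1 hi2 hi3).1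
        have hi1' : k + 1 + (t : ZMod n) + 1 ≠ k - 1 := fun h =>
          hcast (t + 3) (by omega) (by omega) (by push_cast; linear_combination h)
        have hi2' : k + 1 + (t : ZMod n) + 1 ≠ k := fun h =>
          hcast (t + 2) (by omega) (by omega) (by push_cast; linear_combination h)
        have hi3' : k + 1 + (t : ZMod n) + 1 ≠ k + 1 := fun h =>
          hcast (t + 1) (by omega) (by omega) (by push_cast; linear_combination h)
        have hBk := (keyB hl ha hak hi1' hi2' hi3').1
        have := det2_antisymm (l (k + 1)) (l (k + 1 + (t : ZMod n) + 1))
        linarith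
  -- Step C2 : the chain heights grow
  set Y : ℕ → ℤ := fun t => det2 (l (k + 1)) (l (k + 1 + (t : ZMod n))) with hY
  have hY0 : Y 0 = 0 := by
    simp only [hY, Nat.cast_zero, add_zero, det2_self]
  have hY1 : Y 1 = 1 := by
    simp only [hY, Nat.cast_one]
    exact hl.1 (k + 1)
  have hrec : ∀ t : ℕ,
      Y t + a (k + 1 + ((t + 1 : ℕ) : ZMod n)) * Y (t + 1) + Y (t + 2) = 0 := by
    intro t
    have h0 := ha (k + 1 + ((t + 1 : ℕ) : ZMod n))
    have e1 : k + 1 + ((t + 1 : ℕ) : ZMod n) - 1 = k + 1 + ((t : ℕ) : ZMod n) := by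
      push_cast; ring
    have e2 : k + 1 + ((t + 1 : ℕ) : ZMod n) + 1 = k + 1 + ((t + 2 : ℕ) : ZMod n) := by
      push_cast; ring
    rw [e1, e2] at h0
    exact det2_rel h0 (l (k + 1))
  have hmono : ∀ t : ℕ, 1 ≤ t → t ≤ m → Y (t - 1) + 1 ≤ Y t ∧ (t : ℤ) ≤ Y t := by
    intro t
    induction t with
    | zero => exact fun h _ => absurd h (by omega)
    | succ s ih =>
      intro _ hsm
      rcases Nat.eq_zero_or_pos s with rfl | hs1
      · constructor <;> simp [hY0, hY1]
      · obtain ⟨u, rfl⟩ : ∃ u, s = u + 1 := ⟨s - 1, by omega⟩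
        have ih' := ih (by omega) (by omega)
        simp only [Nat.add_sub_cancel] at ih'
        have ihc : ((u + 1 : ℕ) : ℤ) ≤ Y (u + 1) := ih'.2
        push_cast at ihc
        have hc := hC1 (u + 1) (by omega) (by omega)
        have hr := hrec u
        have e3 : u + 1 + 1 = u + 2 := by omega
        simp only [Nat.add_sub_cancel]
        rw [e3]
        have hp : 0 ≤ (-(a (k + 1 + ((u + 1 : ℕ) : ZMod n))) - 2) * Y (u + 1) :=
          mul_nonneg (by linarith) (by linarith)
        constructor
        · linarith [ih'.1]
        · push_cast
          linarith [ih'.1]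
  -- identification of the endpoints of the chain
  have hcm : ((m : ℕ) : ZMod n) = -2 := by
    rw [hm, Nat.cast_sub (by omega : 2 ≤ n), ZMod.natCast_self]
    push_cast; ring
  have hYm : Y m = a k := by
    have e : k + 1 + ((m : ℕ) : ZMod n) = k - 1 := by rw [hcm]; ring
    have h0 := det2_rel (ha k) (l (k + 1))
    have h1 : det2 (l (k + 1)) (l k) = -1 := by rw [det2_antisymm, hl.1 k]
    have h2 := det2_self (l (k + 1))
    rw [h1, h2] at h0
    simp only [hY, e]
    linarith
  have hcm1 : ((m - 1 : ℕ) : ZMod n) = -3 := by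
    rw [show m - 1 = n - 3 by omega, Nat.cast_sub (by omega : 3 ≤ n), ZMod.natCast_self]
    push_cast; ring
  have hYm1 : Y (m - 1) = det2 (l (k + 1)) (l (k - 2)) := by
    have e : k + 1 + ((m - 1 : ℕ) : ZMod n) = k - 2 := by rw [hcm1]; ring
    simp only [hY, e]
  have hfin : det2 (l (k - 2)) (l (k - 1)) = 1 := by
    have := hl.1 (k - 2); rwa [show k - 2 + 1 = k - 1 by ring] at this
  have hexp := det2_rel (ha k) (l (k - 2))
  have hanti := det2_antisymm (l (k - 2)) (l (k + 1))
  have hYD : Y (m - 1) = 1 + a k * det2 (l (k - 2)) (l k) := by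
    rw [hYm1]; linarith
  obtain ⟨hstep, hgem⟩ := hmono m (by omega) le_rfl
  obtain ⟨-, hgem1⟩ := hmono (m - 1) (by omega) (by omega)
  have h2Y : (2 : ℤ) ≤ Y (m - 1) := by
    have h5 : (2 : ℤ) ≤ ((m - 1 : ℕ) : ℤ) := by exact_mod_cast (by omega : 2 ≤ m - 1)
    linarith
  have hak3 : Y (m - 1) + 1 ≤ a k := by rw [← hYm]; exact hstep
  have hD1 : 1 ≤ det2 (l (k - 2)) (l k) := by
    by_contra hcon
    push_neg at hcon
    have : a k * det2 (l (k - 2)) (l k) ≤ 0 :=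
      mul_nonpos_of_nonneg_of_nonpos hak (by omega)
    linarith
  have hfinal : a k * 1 ≤ a k * det2 (l (k - 2)) (l k) :=
    mul_le_mul_of_nonneg_left hD1 hak
  linarith
end

section
/- Let n ≥ 4, let P be a free ℤ-module of rank n − 2 with a symmetric ℤ-bilinear form ⟨·,·⟩, let A : ZMod n → P be an abstract toric system, and let i ∈ ZMod n with ⟨A_i, A_i⟩ = −1. Let A' be the cyclic family of n − 1 elements obtained from A by replacing the three consecutive terms A_{i−1}, A_i, A_{i+1} by the two consecutive terms A_{i−1} + A_i, A_{i+1} + A_i and leaving all other terms unchanged (the blow-down of A at i). Then: every term of A' lies in the sublattice A_i^⊥ = {x ∈ P : ⟨A_i, x⟩ = 0}; A_i^⊥ is a free ℤ-module of rank n − 3; and A' is an abstract toric system of length n − 1 in A_i^⊥ with the restricted bilinear form (in particular ∑_j ⟨A'_j, A'_j⟩ = 12 − 3(n−1)). -/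
namespace BlowdownAux

theorem moduleIntEq {X : Type*} [AddCommGroup X] (i1 i2 : Module ℤ X) : i1 = i2 := by
  letI := AddCommGroup.uniqueIntModule (M := X)
  exact Subsingleton.elim i1 i2

theorem finrank_transport {X : Type*} [AddCommGroup X] (i1 i2 : Module ℤ X) :
    @Module.finrank ℤ X _ _ i1 = @Module.finrank ℤ X _ _ i2 := by rw [moduleIntEq i1 i2]

theorem fr_one {X : Type*} [AddCommGroup X] {iX : Module ℤ X} {iZ : Module ℤ ℤ}
    (e : @LinearEquiv ℤ ℤ _ _ (RingHom.id ℤ) (RingHom.id ℤ) RingHomInvPair.ids RingHomInvPair.ids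
      X ℤ _ _ iX iZ) :
    @Module.finrank ℤ X _ _ iX = 1 := by
  have h := LinearEquiv.finrank_eq e
  rw [h]
  exact (finrank_transport iZ _).trans (Module.finrank_self ℤ)

theorem ker_free_finrank {P : Type*} [AddCommGroup P] [Module ℤ P] [Module.Free ℤ P]
    {m : ℕ} (hm : 1 ≤ m) (hrank : Module.finrank ℤ P = m)
    (φ : P →ₗ[ℤ] ℤ) (x : P) (hx : φ x = 1) (r : ℕ) (hr : m = r + 1)
    (iK : Module ℤ ↥(LinearMap.ker φ)) :
    @Module.Free ℤ _ _ _ iK ∧ @Module.finrank ℤ _ _ _ iK = r := by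
  obtain rfl := moduleIntEq ((LinearMap.ker φ).module) iK
  have hfin : Module.Finite ℤ P := Module.finite_of_finrank_pos (by omega)
  have b := Module.Free.chooseBasis ℤ P
  haveI hnz := b.isTorsionFree
  haveI : IsNoetherian ℤ P := isNoetherian_of_isNoetherianRing_of_finite ℤ P
  have hsurj : Function.Surjective φ := fun c => ⟨c • x, by simp [hx]⟩
  have e := φ.quotKerEquivRange.trans (LinearEquiv.ofTop _ (LinearMap.range_eq_top.mpr hsurj))
  have hq := fr_one e
  have hrn := Submodule.finrank_quotient_add_finrank (LinearMap.ker φ)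
  constructor
  · infer_instance
  · omega

end BlowdownAux

/-- (Blow-down of an abstract toric system.)  Let `A : ZMod n → P` (`n ≥ 4`)
be an abstract toric system in a free `ℤ`-module `P` of rank `n - 2` with a symmetric bilinear
form, and let `i` satisfy `⟨A i, A i⟩ = -1`.  Let `A'` be the cyclic family of `n - 1`
elements obtained by replacing the consecutive terms `A (i-1), A i, A (i+1)` by
`A (i-1) + A i, A (i+1) + A i`.  Then every term of `A'` lies in `A i ^⊥ = ker ⟨A i, ·⟩`,
this sublattice is free of rank `n - 3`, and `A'` is an abstract toric system of length
`n - 1` in it (with the restricted form); in particular `∑ j, ⟨A' j, A' j⟩ = 12 - 3(n-1)`. -/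
theorem abstract_toric_system_blowdown
    (n : ℕ) (hn : 4 ≤ n) [NeZero n] [NeZero (n - 1)]
    (P : Type*) [AddCommGroup P] [Module ℤ P] [Module.Free ℤ P]
    (hrank : Module.finrank ℤ P = n - 2)
    (B : P →ₗ[ℤ] P →ₗ[ℤ] ℤ) (hsymm : ∀ x y : P, B x y = B y x)
    (A : ZMod n → P)
    (h1 : ∀ i : ZMod n, B (A i) (A (i + 1)) = 1)
    (h2 : ∀ i j : ZMod n, j ≠ i - 1 → j ≠ i → j ≠ i + 1 → B (A i) (A j) = 0)
    (h3 : ∑ i : ZMod n, B (A i) (A i) = 12 - 3 * (n : ℤ))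
    (i : ZMod n) (hi : B (A i) (A i) = -1)
    (A' : ZMod (n - 1) → P)
    (hA' : ∀ j : ZMod (n - 1), A' j =
      if j.val = 0 then A (i + 1) + A i
      else if j.val = n - 2 then A (i - 1) + A i
      else A (i + 1 + (j.val : ZMod n))) :
    (∀ j : ZMod (n - 1), A' j ∈ LinearMap.ker (B (A i))) ∧
    Module.Free ℤ (LinearMap.ker (B (A i))) ∧
    Module.finrank ℤ (LinearMap.ker (B (A i))) = n - 3 ∧
    (∀ j : ZMod (n - 1), B (A' j) (A' (j + 1)) = 1) ∧
    (∀ j k : ZMod (n - 1), k ≠ j - 1 → k ≠ j → k ≠ j + 1 → B (A' j) (A' k) = 0) ∧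
    ∑ j : ZMod (n - 1), B (A' j) (A' j) = 12 - 3 * ((n : ℤ) - 1) := by
  -- basic cast facts
  have hc : ∀ a b : ℕ, a < n → b < n → ((a : ZMod n) = (b : ZMod n)) → a = b := by
    intro a b ha hb h
    rwa [ZMod.natCast_eq_natCast_iff, Nat.ModEq, Nat.mod_eq_of_lt ha, Nat.mod_eq_of_lt hb] at h
  have hcast_sub : ∀ k : ℕ, k ≤ n → ((n - k : ℕ) : ZMod n) = -(k : ZMod n) := by
    intro k hk
    have h1 : ((n - k : ℕ) : ZMod n) = ((n : ℕ) : ZMod n) - (k : ZMod n) := by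
      rw [Nat.cast_sub hk]
    rw [h1, ZMod.natCast_self]; ring
  have hg0 : i + ((0 : ℕ) : ZMod n) = i := by simp
  -- the orthogonality engine
  have horth : ∀ s t : ℕ, s < n → t < n → s + 2 ≤ t → t + 2 ≤ s + n →
      B (A (i + (s : ZMod n))) (A (i + (t : ZMod n))) = 0 := by
    intro s t hs ht hst hts
    apply h2
    · intro h
      rcases Nat.eq_zero_or_pos s with rfl | hs1
      · have h' : (t : ZMod n) = ((n - 1 : ℕ) : ZMod n) := by
          rw [hcast_sub 1 (by omega)]
          push_cast at h ⊢
          linear_combination h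
        have := hc t (n - 1) ht (by omega) h'
        omega
      · have h' : (t : ZMod n) = ((s - 1 : ℕ) : ZMod n) := by
          rw [Nat.cast_sub (by omega : 1 ≤ s)]
          push_cast at h ⊢
          linear_combination h
        have := hc t (s - 1) ht (by omega) h'
        omega
    · intro h
      have h' : (t : ZMod n) = (s : ZMod n) := by linear_combination h
      have := hc t s ht hs h'
      omega
    · intro h
      have h' : (t : ZMod n) = ((s + 1 : ℕ) : ZMod n) := by
        push_cast at h ⊢
        linear_combination h
      have := hc t (s + 1) ht (by omega) h'
      omega
  have horth' : ∀ s t : ℕ, s < n → t < n → s + 2 ≤ t → t + 2 ≤ s + n →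
      B (A (i + (t : ZMod n))) (A (i + (s : ZMod n))) = 0 := by
    intro s t hs ht h1' h2'
    rw [hsymm]
    exact horth s t hs ht h1' h2'
  -- the adjacency engine
  have hadj : ∀ s t : ℕ, (s + 1 = t ∨ s + 1 = t + n) →
      B (A (i + (s : ZMod n))) (A (i + (t : ZMod n))) = 1 := by
    intro s t h
    have key : i + (t : ZMod n) = (i + (s : ZMod n)) + 1 := by
      rcases h with h | h
      · subst h; push_cast; ring
      · have h' : ((s + 1 : ℕ) : ZMod n) = ((t + n : ℕ) : ZMod n) := by rw [h]
        push_cast [ZMod.natCast_self] at h' ⊢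
        linear_combination -h'
    rw [key]
    exact h1 _
  -- the basic facts
  have f1 : B (A i) (A (i + ((1 : ℕ) : ZMod n))) = 1 := by
    have h := hadj 0 1 (Or.inl rfl)
    rwa [hg0] at h
  have f4 : B (A (i + ((1 : ℕ) : ZMod n))) (A i) = 1 := by rw [hsymm]; exact f1
  have f2 : B (A (i + ((n - 1 : ℕ) : ZMod n))) (A i) = 1 := by
    have h := hadj (n - 1) 0 (Or.inr (by omega))
    rwa [hg0] at h
  have f3 : B (A i) (A (i + ((n - 1 : ℕ) : ZMod n))) = 1 := by rw [hsymm]; exact f2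
  -- rewrite A' in offset form
  have hA'' : ∀ j : ZMod (n - 1), A' j =
      if j.val = 0 then A (i + ((1 : ℕ) : ZMod n)) + A i
      else if j.val = n - 2 then A (i + ((n - 1 : ℕ) : ZMod n)) + A i
      else A (i + ((j.val + 1 : ℕ) : ZMod n)) := by
    intro j
    rw [hA' j]
    have e1 : i + ((1 : ℕ) : ZMod n) = i + 1 := by push_cast; ring
    have e2 : i + ((n - 1 : ℕ) : ZMod n) = i - 1 := by rw [hcast_sub 1 (by omega)]; ring
    have e3 : i + ((j.val + 1 : ℕ) : ZMod n) = i + 1 + (j.val : ZMod n) := by push_cast; ring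
    rw [e1, e2, e3]
  have hval : ∀ j : ZMod (n - 1), j.val < n - 1 := fun j => ZMod.val_lt j
  haveI : Fact (1 < n - 1) := ⟨by omega⟩
  have hj1val : ∀ j : ZMod (n - 1), (j + 1).val = (j.val + 1) % (n - 1) := by
    intro j
    have h := ZMod.val_add j 1
    rwa [ZMod.val_one (n - 1)] at h
  have hvalinj : ∀ a b : ZMod (n - 1), a.val = b.val → a = b := fun a b h =>
    ZMod.val_injective (n - 1) h
  -- Part 1 : kernel membership
  have part1 : ∀ j : ZMod (n - 1), A' j ∈ LinearMap.ker (B (A i)) := by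
    intro j
    rw [LinearMap.mem_ker, hA'' j]
    have hv := hval j
    by_cases hc0 : j.val = 0
    · rw [if_pos hc0, map_add, f1, hi]; ring
    · by_cases hc2 : j.val = n - 2
      · rw [if_neg hc0, if_pos hc2, map_add, f3, hi]; ring
      · rw [if_neg hc0, if_neg hc2]
        have h := horth 0 (j.val + 1) (by omega) (by omega) (by omega) (by omega)
        rwa [hg0] at h
  -- Part 4 : adjacency of the blow-down
  have part4 : ∀ j : ZMod (n - 1), B (A' j) (A' (j + 1)) = 1 := by
    intro j
    have hv := hval j
    rw [hA'' j, hA'' (j + 1)]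
    by_cases hc2 : j.val = n - 2
    · have hw : (j + 1).val = 0 := by
        rw [hj1val j, show j.val + 1 = n - 1 by omega, Nat.mod_self]
      rw [hw, if_neg (show j.val ≠ 0 by omega), if_pos hc2, if_pos rfl]
      have o1 := horth' 1 (n - 1) (by omega) (by omega) (by omega) (by omega)
      simp only [map_add, LinearMap.add_apply]
      rw [o1, f2, f1, hi]; ring
    · have hw : (j + 1).val = j.val + 1 := by
        rw [hj1val j]; exact Nat.mod_eq_of_lt (by omega)
      rw [hw]
      by_cases hc0 : j.val = 0
      · rw [if_pos hc0, hc0,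
          if_neg (show (0 : ℕ) + 1 ≠ 0 by omega), if_neg (show (0 : ℕ) + 1 ≠ n - 2 by omega)]
        have o1 := hadj 1 (0 + 1 + 1) (Or.inl (by omega))
        have o2 := horth 0 (0 + 1 + 1) (by omega) (by omega) (by omega) (by omega)
        rw [hg0] at o2
        simp only [map_add, LinearMap.add_apply]
        rw [o1, o2]; ring
      · rw [if_neg hc0, if_neg hc2]
        by_cases hc3 : j.val = n - 3
        · rw [if_neg (show j.val + 1 ≠ 0 by omega), if_pos (show j.val + 1 = n - 2 by omega)]
          have o1 := hadj (j.val + 1) (n - 1) (Or.inl (by omega))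
          have o2 := horth' 0 (j.val + 1) (by omega) (by omega) (by omega) (by omega)
          rw [hg0] at o2
          rw [map_add, o1, o2]; ring
        · rw [if_neg (show j.val + 1 ≠ 0 by omega), if_neg (show j.val + 1 ≠ n - 2 by omega)]
          exact hadj (j.val + 1) (j.val + 1 + 1) (Or.inl rfl)
  -- Part 5 : orthogonality of the blow-down
  have claim : ∀ p q : ZMod (n - 1), p.val + 2 ≤ q.val → q.val + 2 ≤ p.val + (n - 1) →
      B (A' p) (A' q) = 0 := by
    intro p q hpq hqp
    have hvp := hval p
    have hvq := hval q
    rw [hA'' p, hA'' q]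
    rw [if_neg (show q.val ≠ 0 by omega)]
    have hp2 : p.val ≠ n - 2 := by omega
    by_cases hp0 : p.val = 0
    · rw [if_pos hp0]
      by_cases hq2 : q.val = n - 2
      · exact absurd hqp (by omega)
      · rw [if_neg hq2]
        have o1 := horth 1 (q.val + 1) (by omega) (by omega) (by omega) (by omega)
        have o2 := horth 0 (q.val + 1) (by omega) (by omega) (by omega) (by omega)
        rw [hg0] at o2
        simp only [map_add, LinearMap.add_apply]
        rw [o1, o2]; ring
    · rw [if_neg hp0, if_neg hp2]
      by_cases hq2 : q.val = n - 2
      · rw [if_pos hq2]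
        have o1 := horth (p.val + 1) (n - 1) (by omega) (by omega) (by omega) (by omega)
        have o2 := horth' 0 (p.val + 1) (by omega) (by omega) (by omega) (by omega)
        rw [hg0] at o2
        rw [map_add, o1, o2]; ring
      · rw [if_neg hq2]
        exact horth (p.val + 1) (q.val + 1) (by omega) (by omega) (by omega) (by omega)
  have part5 : ∀ j k : ZMod (n - 1), k ≠ j - 1 → k ≠ j → k ≠ j + 1 → B (A' j) (A' k) = 0 := by
    intro j k hk1 hk2 hk3
    have hvj := hval j
    have hvk := hval k
    have hne : k.val ≠ j.val := fun h => hk2 (hvalinj _ _ h)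
    have h3' : k.val ≠ (j.val + 1) % (n - 1) := fun h =>
      hk3 (hvalinj _ _ (h.trans (hj1val j).symm))
    have h4' : j.val ≠ (k.val + 1) % (n - 1) := by
      intro h
      refine hk1 ?_
      have : j = k + 1 := hvalinj _ _ (h.trans (hj1val k).symm)
      rw [this]; ring
    have hA1 : j.val = n - 2 → k.val ≠ 0 := by
      intro hj2 h0
      exact h3' (by rw [h0, show j.val + 1 = n - 1 by omega, Nat.mod_self])
    have hA2 : j.val ≠ n - 2 → k.val ≠ j.val + 1 := by
      intro hj2 h
      exact h3' (by rw [h, Nat.mod_eq_of_lt (by omega)])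
    have hB1 : k.val = n - 2 → j.val ≠ 0 := by
      intro hk2' h0
      exact h4' (by rw [h0, show k.val + 1 = n - 1 by omega, Nat.mod_self])
    have hB2 : k.val ≠ n - 2 → j.val ≠ k.val + 1 := by
      intro hk2' h
      exact h4' (by rw [h, Nat.mod_eq_of_lt (by omega)])
    rcases Nat.lt_or_ge j.val k.val with hlt | hge
    · exact claim j k (by omega) (by omega)
    · rw [hsymm]
      exact claim k j (by omega) (by omega)
  -- Part 6 : the sum
  have part6 : ∑ j : ZMod (n - 1), B (A' j) (A' j) = 12 - 3 * ((n : ℤ) - 1) := by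
    have hvn2 : ((n - 2 : ℕ) : ZMod (n - 1)).val = n - 2 := ZMod.val_cast_of_lt (by omega)
    have hsummand : ∀ j : ZMod (n - 1), B (A' j) (A' j)
        = B (A (i + ((j.val + 1 : ℕ) : ZMod n))) (A (i + ((j.val + 1 : ℕ) : ZMod n)))
          + ((if j = 0 then (1 : ℤ) else 0)
            + (if j = ((n - 2 : ℕ) : ZMod (n - 1)) then (1 : ℤ) else 0)) := by
      intro j
      have hv := hval j
      rw [hA'' j]
      by_cases hc0 : j.val = 0
      · have hj0 : j = 0 := (ZMod.val_eq_zero j).mp hc0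
        have hjne : j ≠ ((n - 2 : ℕ) : ZMod (n - 1)) := by
          intro h; rw [h, hvn2] at hc0; omega
        rw [if_pos hc0, if_pos hj0, if_neg hjne, hc0, show (0 + 1 : ℕ) = 1 from rfl]
        simp only [map_add, LinearMap.add_apply]
        rw [f1, f4, hi]; ring
      · by_cases hc2 : j.val = n - 2
        · have hj2 : j = ((n - 2 : ℕ) : ZMod (n - 1)) := hvalinj _ _ (by rw [hvn2, hc2])
          have hjne : j ≠ 0 := fun h => hc0 ((ZMod.val_eq_zero j).mpr h)
          rw [if_neg hc0, if_pos hc2, if_neg hjne, if_pos hj2, hc2,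
            show (n - 2 + 1 : ℕ) = n - 1 by omega]
          simp only [map_add, LinearMap.add_apply]
          rw [f2, f3, hi]; ring
        · have hjne0 : j ≠ 0 := fun h => hc0 ((ZMod.val_eq_zero j).mpr h)
          have hjne2 : j ≠ ((n - 2 : ℕ) : ZMod (n - 1)) := fun h => hc2 (by rw [h, hvn2])
          rw [if_neg hc0, if_neg hc2, if_neg hjne0, if_neg hjne2]; ring
    have hs := Finset.sum_congr rfl (fun j (_ : j ∈ Finset.univ) => hsummand j)
    have c1 : ∑ j : ZMod (n - 1), (if j = 0 then (1 : ℤ) else 0) = 1 := by simp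
    have c2 : ∑ j : ZMod (n - 1),
        (if j = ((n - 2 : ℕ) : ZMod (n - 1)) then (1 : ℤ) else 0) = 1 := by simp
    have hmain : ∑ j : ZMod (n - 1),
        B (A (i + ((j.val + 1 : ℕ) : ZMod n))) (A (i + ((j.val + 1 : ℕ) : ZMod n)))
        = ∑ s ∈ Finset.range (n - 1),
          B (A (i + ((s + 1 : ℕ) : ZMod n))) (A (i + ((s + 1 : ℕ) : ZMod n))) := by
      refine Finset.sum_nbij' (fun j => j.val) (fun s => (s : ZMod (n - 1))) ?_ ?_ ?_ ?_ ?_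
      · exact fun j _ => Finset.mem_range.mpr (hval j)
      · exact fun s _ => Finset.mem_univ _
      · exact fun j _ => ZMod.natCast_rightInverse j
      · exact fun s hs' => ZMod.val_cast_of_lt (Finset.mem_range.mp hs')
      · exact fun j _ => rfl
    have h3' : ∑ s ∈ Finset.range n,
        B (A (i + (s : ZMod n))) (A (i + (s : ZMod n))) = 12 - 3 * (n : ℤ) := by
      refine Eq.trans ?_ h3
      refine Finset.sum_nbij' (fun s => i + (s : ZMod n)) (fun k => (k - i).val) ?_ ?_ ?_ ?_ ?_
      · exact fun s _ => Finset.mem_univ _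
      · intro k _
        exact Finset.mem_range.mpr (ZMod.val_lt _)
      · intro s hs'
        show (i + (s : ZMod n) - i).val = s
        rw [show i + (s : ZMod n) - i = (s : ZMod n) by ring,
          ZMod.val_cast_of_lt (Finset.mem_range.mp hs')]
      · intro k _
        show i + (((k - i).val : ℕ) : ZMod n) = k
        rw [ZMod.natCast_rightInverse (k - i)]; ring
      · exact fun s _ => rfl
    have hr : Finset.range n = Finset.range (n - 1 + 1) := by
      rw [show n - 1 + 1 = n by omega]
    rw [hr, Finset.sum_range_succ'] at h3'
    simp only [hg0, hi] at h3'
    rw [hs, Finset.sum_add_distrib, Finset.sum_add_distrib, c1, c2, hmain]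
    linarith [h3']
  refine ⟨part1, ?_, ?_, part4, part5, part6⟩
  · exact (BlowdownAux.ker_free_finrank (m := n - 2) (by omega) hrank (B (A i)) (A (i + 1))
      (h1 i) (n - 3) (by omega) _).1
  · exact (BlowdownAux.ker_free_finrank (m := n - 2) (by omega) hrank (B (A i)) (A (i + 1))
      (h1 i) (n - 3) (by omega) _).2
end

section
/- Let n ≥ 3, let P be a free ℤ-module of rank n − 2 with a symmetric ℤ-bilinear form ⟨·,·⟩, and let A : ZMod n → P satisfy conditions (i) and (ii) of an abstract toric system. Let 3 ≤ t ≤ n and let I_1, …, I_t be a partition of ZMod n into t nonempty sets, each consisting of cyclically consecutive indices, arranged in cyclic order (for every j ∈ ZMod t, the interval I_{j+1} immediately follows I_j in the cyclic order of ZMod n). Define A'_j := ∑_{k ∈ I_j} A_k. Then ⟨A'_j, A'_{j+1}⟩ = 1 for every j ∈ ZMod t, and ⟨A'_j, A'_k⟩ = 0 whenever j, k ∈ ZMod t with k ∉ {j−1, j, j+1} (i.e., A'_1, …, A'_t is a short toric system). -/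
/-- Let `A : ZMod n → P` satisfy conditions (i) and (ii) of an abstract toric
system.  Partition `ZMod n` into `t` nonempty cyclic intervals arranged in cyclic order
(encoded by starting points `s j` and lengths `m j ≥ 1` with `∑ m j = n` and
`s (j+1) = s j + m j`), and set `A' j := ∑_{k ∈ I_j} A k`.  Then `A'` is a short toric
system: `⟨A' j, A' (j+1)⟩ = 1` for all `j` and `⟨A' j, A' k⟩ = 0` for non-adjacent pairs. -/
theorem abstract_toric_system_interval_sums_short_toric_system
    (n : ℕ) (hn : 3 ≤ n) [NeZero n]
    (P : Type*) [AddCommGroup P] [Module ℤ P] [Module.Free ℤ P]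
    (hrank : Module.finrank ℤ P = n - 2)
    (B : P →ₗ[ℤ] P →ₗ[ℤ] ℤ) (hsymm : ∀ x y : P, B x y = B y x)
    (A : ZMod n → P)
    (h1 : ∀ i : ZMod n, B (A i) (A (i + 1)) = 1)
    (h2 : ∀ i j : ZMod n, j ≠ i - 1 → j ≠ i → j ≠ i + 1 → B (A i) (A j) = 0)
    (t : ℕ) (ht : 3 ≤ t) (htn : t ≤ n) [NeZero t]
    (s : ZMod t → ZMod n) (m : ZMod t → ℕ)
    (hm : ∀ j : ZMod t, 1 ≤ m j)
    (hsum : ∑ j : ZMod t, m j = n)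
    (hnext : ∀ j : ZMod t, s (j + 1) = s j + (m j : ZMod n))
    (A' : ZMod t → P)
    (hA' : ∀ j : ZMod t, A' j = ∑ k ∈ Finset.range (m j), A (s j + (k : ZMod n))) :
    (∀ j : ZMod t, B (A' j) (A' (j + 1)) = 1) ∧
    (∀ j k : ZMod t, k ≠ j - 1 → k ≠ j → k ≠ j + 1 → B (A' j) (A' k) = 0) := by
  classical
  set f : ℕ → ZMod n := fun p => s 0 + (p : ZMod n) with hf
  set m' : ℕ → ℕ := fun i => m (i : ZMod t) with hm'def
  set σ : ℕ → ℕ := fun j => ∑ i ∈ Finset.range j, m' i with hσdef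
  have hm1 : ∀ i : ℕ, 1 ≤ m' i := fun i => hm _
  have hσsucc : ∀ j : ℕ, σ (j + 1) = σ j + m' j := fun j => Finset.sum_range_succ _ _
  have hσ0 : σ 0 = 0 := Finset.sum_range_zero _
  have hσmono : StrictMono σ := strictMono_nat_of_lt_succ (fun j => by
    have := hm1 j; have := hσsucc j; omega)
  have hσinj : Function.Injective σ := hσmono.injective
  have hσle : ∀ a : ℕ, a ≤ σ a := by
    intro a
    induction a with
    | zero => omega
    | succ k ih => have := hm1 k; have := hσsucc k; omega
  have hσt : σ t = n := by
    rw [← hsum, hσdef]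
    exact Finset.sum_nbij' (fun i => (i : ZMod t)) (fun j => j.val)
      (fun a _ => Finset.mem_univ _)
      (fun a _ => Finset.mem_range.2 (ZMod.val_lt a))
      (fun a ha => ZMod.val_cast_of_lt (Finset.mem_range.1 ha))
      (fun a _ => ZMod.natCast_rightInverse a)
      (fun a _ => rfl)
  have hσlen : ∀ c : ℕ, c ≤ t → σ c ≤ n := fun c hc => hσt ▸ hσmono.monotone hc
  have hfinj : ∀ a b : ℕ, a < n → b < n → f a = f b → a = b := by
    intro a b ha hb hab
    have : (a : ZMod n) = (b : ZMod n) := by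
      have := hab
      simpa [hf] using this
    have := congrArg ZMod.val this
    rwa [ZMod.val_cast_of_lt ha, ZMod.val_cast_of_lt hb] at this
  have hfwrap : f n = f 0 := by simp [hf]
  have ho : ∀ p : ℕ, B (A (f p)) (A (f (p + 1))) = 1 := by
    intro p
    have : f (p + 1) = f p + 1 := by simp [hf]; push_cast; ring
    rw [this]; exact h1 _
  have hz : ∀ p q : ℕ, p < n → q < n → p ≠ q → q ≠ p + 1 → ¬(p + 1 = n ∧ q = 0) →
      p ≠ q + 1 → ¬(q + 1 = n ∧ p = 0) → B (A (f p)) (A (f q)) = 0 := by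
    intro p q hp hq hpq h1' h2' h3' h4'
    apply h2
    · intro hcon
      have : f p = f q + 1 := by rw [hcon]; ring
      have hfq : f q + 1 = f (q + 1) := by simp [hf]; push_cast; ring
      rw [hfq] at this
      rcases Nat.lt_or_ge (q + 1) n with h | h
      · exact h3' (hfinj p (q + 1) hp h this)
      · have hqn : q + 1 = n := by omega
        have : f p = f 0 := by rw [this, hqn, hfwrap]
        exact h4' ⟨hqn, hfinj p 0 hp (by omega) this⟩
    · intro hcon; exact hpq (hfinj p q hp hq hcon.symm)
    · intro hcon
      have hfp : f p + 1 = f (p + 1) := by simp [hf]; push_cast; ring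
      rw [hfp] at hcon
      rcases Nat.lt_or_ge (p + 1) n with h | h
      · exact h1' (hfinj q (p + 1) hq h hcon)
      · have hpn : p + 1 = n := by omega
        have : f q = f 0 := by rw [hcon, hpn, hfwrap]
        exact h2' ⟨hpn, hfinj q 0 hq (by omega) this⟩
  have hs' : ∀ j : ℕ, s (j : ZMod t) = f (σ j) := by
    intro j
    induction j with
    | zero => simp [hf, hσ0]
    | succ k ih =>
      have : ((k + 1 : ℕ) : ZMod t) = (k : ZMod t) + 1 := by push_cast; ring
      rw [this, hnext, ih, hσsucc]
      simp only [hf, hm'def]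
      push_cast
      ring
  have hA2 : ∀ j : ℕ, A' (j : ZMod t) = ∑ p ∈ Finset.Ico (σ j) (σ (j + 1)), A (f p) := by
    intro j
    rw [hA', Finset.sum_Ico_eq_sum_range]
    have hlen : σ (j + 1) - σ j = m' j := by have := hσsucc j; omega
    rw [hlen]
    refine Finset.sum_congr rfl fun k _ => ?_
    rw [hs' j]
    congr 1
    simp [hf]
    push_cast
    ring
  have expand : ∀ (S T : Finset ℕ),
      B (∑ p ∈ S, A (f p)) (∑ q ∈ T, A (f q))
        = ∑ x ∈ S ×ˢ T, B (A (f x.1)) (A (f x.2)) := by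
    intro S T
    rw [Finset.sum_product]
    simp only [map_sum, LinearMap.coe_sum, Finset.sum_apply]
    exact Finset.sum_comm
  constructor
  · intro j
    set a := j.val with hadef
    have haj : ((a : ℕ) : ZMod t) = j := ZMod.natCast_rightInverse j
    have halt : a < t := ZMod.val_lt j
    rcases Nat.lt_or_ge (a + 1) t with hat | hat
    · rw [← haj]
      rw [show ((a : ZMod t) + 1) = ((a + 1 : ℕ) : ZMod t) by push_cast; ring]
      rw [hA2 a, hA2 (a + 1), expand]
      have hkey : σ a < σ (a + 1) := hσmono (by omega)
      have hkey2 : σ (a + 1) < σ (a + 1 + 1) := hσmono (by omega)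
      have hkey3' : σ (a + 1 + 1) ≤ n := hσlen _ (by omega)

      have h1a : 1 ≤ σ (a + 1) := le_trans (by omega) (hσle (a + 1))
      rw [Finset.sum_eq_single_of_mem (σ (a + 1) - 1, σ (a + 1))
        (by simp only [Finset.mem_product, Finset.mem_Ico]; omega)]
      · have : σ (a + 1) = (σ (a + 1) - 1) + 1 := by omega
        conv_lhs => rw [this]
        exact ho _
      · rintro ⟨p, q⟩ hmem hne
        simp only [Finset.mem_product, Finset.mem_Ico] at hmem
        have hne' : ¬(p = σ (a + 1) - 1 ∧ q = σ (a + 1)) := by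
          intro ⟨e1, e2⟩; exact hne (by rw [e1, e2])
        apply hz
        · omega
        · omega
        · omega
        · omega
        · omega
        · omega
        · -- ¬(q + 1 = n ∧ p = 0)
          rintro ⟨hq1, hp0⟩
          have hσa0 : σ a = 0 := by omega
          have ha0 : a = 0 := hσinj (by rw [hσa0, hσ0])
          have hσa2 : σ (a + 1 + 1) = n := by omega
          have hat2 : a + 1 + 1 = t := hσinj (by rw [hσa2, hσt])
          omega
    · -- a + 1 = t, wrap-around interval
      have hat' : a + 1 = t := by omega
      rw [← haj]
      rw [show ((a : ZMod t) + 1) = ((0 : ℕ) : ZMod t) by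
        rw [show ((a : ZMod t) + 1) = ((a + 1 : ℕ) : ZMod t) by push_cast; ring, hat']
        simp]
      rw [hA2 a, hA2 0, expand]
      have hkey : σ a < σ (a + 1) := hσmono (by omega)
      have hσan : σ (a + 1) = n := by rw [hat', hσt]
      have hσ1a : σ (0 + 1) < σ a := hσmono (by omega)
      have hσ01 : σ 0 < σ (0 + 1) := hσmono (by omega)
      have haσ : a ≤ σ a := hσle a
      rw [Finset.sum_eq_single_of_mem (n - 1, 0)
        (by simp only [Finset.mem_product, Finset.mem_Ico]; omega)]
      · have h01 : (0 : ℕ) = (n - 1) + 1 - n := by omega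
        have : f 0 = f ((n - 1) + 1) := by
          rw [show (n - 1) + 1 = n by omega, hfwrap]
        rw [this]
        exact ho _
      · rintro ⟨p, q⟩ hmem hne
        simp only [Finset.mem_product, Finset.mem_Ico] at hmem
        have hne' : ¬(p = n - 1 ∧ q = 0) := by
          intro ⟨e1, e2⟩; exact hne (by rw [e1, e2])
        apply hz <;> omega
  · intro j k hk1 hk2 hk3
    set a := j.val with hadef
    set b := k.val with hbdef
    have haj : ((a : ℕ) : ZMod t) = j := ZMod.natCast_rightInverse j
    have hbk : ((b : ℕ) : ZMod t) = k := ZMod.natCast_rightInverse k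
    have halt : a < t := ZMod.val_lt j
    have hblt : b < t := ZMod.val_lt k
    have hab : b ≠ a := by
      intro h; exact hk2 (by rw [← hbk, ← haj, h])
    have hnadj1 : ¬(b = a + 1) := by
      intro h
      exact hk3 (by rw [← hbk, ← haj, h]; push_cast; ring)
    have hnadj1' : ¬(a + 1 = t ∧ b = 0) := by
      rintro ⟨h, h'⟩
      apply hk3
      rw [← hbk, ← haj, h']
      rw [show ((a : ZMod t) + 1) = ((a + 1 : ℕ) : ZMod t) by push_cast; ring, h]
      simp
    have hk1' : k + 1 ≠ j := by
      intro h; exact hk1 (by rw [← h]; ring)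
    have hnadj2 : ¬(a = b + 1) := by
      intro h
      exact hk1' (by rw [← hbk, ← haj, h]; push_cast; ring)
    have hnadj2' : ¬(b + 1 = t ∧ a = 0) := by
      rintro ⟨h, h'⟩
      apply hk1'
      rw [← hbk, ← haj, h']
      rw [show ((b : ZMod t) + 1) = ((b + 1 : ℕ) : ZMod t) by push_cast; ring, h]
      simp
    rw [← haj, ← hbk, hA2 a, hA2 b, expand]
    apply Finset.sum_eq_zero
    rintro ⟨p, q⟩ hmem
    simp only [Finset.mem_product, Finset.mem_Ico] at hmem
    have hσa1 : σ a < σ (a + 1) := hσmono (by omega)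
    have hσb1 : σ b < σ (b + 1) := hσmono (by omega)
    have hσ00 : σ 0 = 0 := hσ0
    have hσa1n : σ (a + 1) ≤ n := hσlen _ (by omega)
    have hσb1n : σ (b + 1) ≤ n := hσlen _ (by omega)
    have horder : σ (a + 1) ≤ σ b ∨ σ (b + 1) ≤ σ a := by
      rcases Nat.lt_or_ge a b with h | h
      · exact Or.inl (hσmono.monotone (by omega))
      · exact Or.inr (hσmono.monotone (by omega))
    apply hz
    · omega
    · omega
    · omega
    · -- q ≠ p + 1
      intro hcon
      rcases horder with h | h
      · have e1 : σ (a + 1) = p + 1 := by omega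
        have e2 : σ b = p + 1 := by omega
        exact hnadj1 (hσinj (by rw [e2, ← e1])).symm
      · omega
    · -- ¬(p + 1 = n ∧ q = 0)
      rintro ⟨hp1, hq0⟩
      have hb0 : b = 0 := hσinj (by rw [show σ b = 0 by omega, hσ0])
      have hat : a + 1 = t := hσinj (by rw [show σ (a + 1) = n by omega, hσt])
      exact hnadj1' ⟨hat, hb0⟩
    · -- p ≠ q + 1
      intro hcon
      rcases horder with h | h
      · omega
      · have e1 : σ (b + 1) = q + 1 := by omega
        have e2 : σ a = q + 1 := by omega
        exact hnadj2 (hσinj (by rw [e2, ← e1])).symm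
    · -- ¬(q + 1 = n ∧ p = 0)
      rintro ⟨hq1, hp0⟩
      have ha0 : a = 0 := hσinj (by rw [show σ a = 0 by omega, hσ0])
      have hbt : b + 1 = t := hσinj (by rw [show σ (b + 1) = n by omega, hσt])
      exact hnadj2' ⟨hbt, ha0⟩
end

section
/- A quadruple (A_1, A_2, A_3, A_4) in the Picard lattice of the Hirzebruch surface 𝔽_a is a toric system if and only if, after a cyclic rotation of the indices and possibly a reversal of their order, it equals one of the following: (i) (P, s·P + Q, P, −(a + s)·P + Q) for some s ∈ ℤ; or (ii) a is even and the quadruple is (−(a/2)·P + Q, P + s·(−(a/2)·P + Q), −(a/2)·P + Q, P − s·(−(a/2)·P + Q)) for some s ∈ ℤ. -/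
private lemma h4z : ∀ z : ZMod 4, z = 0 ∨ z = 1 ∨ z = 2 ∨ z = 3 := by decide

@[simp] private lemma za01 : (0:ZMod 4) + 1 = 1 := by decide
@[simp] private lemma za02 : (0:ZMod 4) + 2 = 2 := by decide
@[simp] private lemma za03 : (0:ZMod 4) + 3 = 3 := by decide
@[simp] private lemma za11 : (1:ZMod 4) + 1 = 2 := by decide
@[simp] private lemma za12 : (1:ZMod 4) + 2 = 3 := by decide
@[simp] private lemma za13 : (1:ZMod 4) + 3 = 0 := by decide
@[simp] private lemma za21 : (2:ZMod 4) + 1 = 3 := by decide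
@[simp] private lemma za22 : (2:ZMod 4) + 2 = 0 := by decide
@[simp] private lemma za23 : (2:ZMod 4) + 3 = 1 := by decide
@[simp] private lemma za31 : (3:ZMod 4) + 1 = 0 := by decide
@[simp] private lemma za32 : (3:ZMod 4) + 2 = 1 := by decide
@[simp] private lemma za33 : (3:ZMod 4) + 3 = 2 := by decide
@[simp] private lemma zn1 : -(1:ZMod 4) = 3 := by decide
@[simp] private lemma zn2 : -(2:ZMod 4) = 2 := by decide
@[simp] private lemma zn3 : -(3:ZMod 4) = 1 := by decide
@[simp] private lemma ze10 : ((1:ZMod 4) = 0) = False := by decide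
@[simp] private lemma ze20 : ((2:ZMod 4) = 0) = False := by decide
@[simp] private lemma ze21 : ((2:ZMod 4) = 1) = False := by decide
@[simp] private lemma ze30 : ((3:ZMod 4) = 0) = False := by decide
@[simp] private lemma ze31 : ((3:ZMod 4) = 1) = False := by decide
@[simp] private lemma ze32 : ((3:ZMod 4) = 2) = False := by decide

private lemma smul1 (s b : ℤ) : ((1:ℤ),(0:ℤ)) + s • ((-b:ℤ),(1:ℤ)) = (1 - s*b, s) := by
  simp [Prod.ext_iff, smul_eq_mul]; ring
private lemma smul2 (s b : ℤ) : ((1:ℤ),(0:ℤ)) - s • ((-b:ℤ),(1:ℤ)) = (1 + s*b, -s) := by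
  simp [Prod.ext_iff, smul_eq_mul]

private lemma gram3 (a : ℤ) (form : (ℤ × ℤ) → (ℤ × ℤ) → ℤ)
    (hform : ∀ u v : ℤ × ℤ, form u v = u.1 * v.2 + u.2 * v.1 + a * u.2 * v.2)
    (u v w : ℤ × ℤ) :
    form u u * form v v * form w w + 2 * (form u v * form v w * form u w) =
      form u u * (form v w)^2 + form v v * (form u w)^2 + form w w * (form u v)^2 := by
  simp only [hform]; ring

private lemma sumsq (a : ℤ) (form : (ℤ × ℤ) → (ℤ × ℤ) → ℤ)
    (hform : ∀ u v : ℤ × ℤ, form u v = u.1 * v.2 + u.2 * v.1 + a * u.2 * v.2)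
    (u v w z : ℤ × ℤ) :
    form u u + form v v + form w w + form z z =
      form (u+v+w+z) (u+v+w+z) -
        2*(form u v + form v w + form w z + form z u + form u w + form v z) := by
  simp only [hform, Prod.fst_add, Prod.snd_add]; ring

private lemma int_key (a p0 q0 p1 q1 p2 q2 p3 q3 : ℤ)
    (e0 : p0*q1 + q0*p1 + a*q0*q1 = 1)
    (e1 : p1*q2 + q1*p2 + a*q1*q2 = 1)
    (e3 : p3*q0 + q3*p0 + a*q3*q0 = 1)
    (d02 : p0*q2 + q0*p2 + a*q0*q2 = 0)
    (h00 : p0*q0 + q0*p0 + a*q0*q0 = 0)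
    (sp : p0+p1+p2+p3 = 2-a) (sq : q0+q1+q2+q3 = 2) :
    (∃ s : ℤ, p0 = 1 ∧ q0 = 0 ∧ p1 = s ∧ q1 = 1 ∧ p2 = 1 ∧ q2 = 0 ∧ p3 = -(a+s) ∧ q3 = 1) ∨
    (∃ s b : ℤ, a = 2*b ∧ p0 = -b ∧ q0 = 1 ∧ p1 = 1 - s*b ∧ q1 = s ∧ p2 = -b ∧ q2 = 1 ∧
      p3 = 1 + s*b ∧ q3 = -s) := by
  rcases eq_or_ne q0 0 with hq | hq
  · subst hq
    have hp0q1 : p0 * q1 = 1 := by linear_combination e0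
    have hp0 : p0 ≠ 0 := by rintro rfl; simp at hp0q1
    have hq2 : q2 = 0 := by
      have h1 : p0 * q2 = 0 := by linear_combination d02
      rcases mul_eq_zero.mp h1 with h | h
      · exact absurd h hp0
      · exact h
    subst hq2
    have hp0q3 : p0 * q3 = 1 := by linear_combination e3
    rcases Int.isUnit_iff.mp (IsUnit.of_mul_eq_one _ hp0q1) with h | h
    · subst h
      have hq1 : q1 = 1 := by linarith
      have hq3 : q3 = 1 := by linarith
      have hp2 : p2 = 1 := by linear_combination e1 - p2*hq1
      exact Or.inl ⟨p1, rfl, rfl, rfl, hq1, hp2, rfl, by linarith, hq3⟩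
    · subst h
      have hq1 : q1 = -1 := by linarith
      have hq3 : q3 = -1 := by linarith
      omega
  · have hdet : p0*q1 - p1*q0 ≠ 0 := by
      intro h
      exact hq (by linear_combination -q0*e0 + q1*h00 - q0*h)
    have hx0 : (q0-q2)*p0 + ((p0-p2) + a*(q0-q2))*q0 = 0 := by linear_combination h00 - d02
    have hx1 : (q0-q2)*p1 + ((p0-p2) + a*(q0-q2))*q1 = 0 := by linear_combination e0 - e1
    have hc' : (q0 - q2) * (p0*q1 - p1*q0) = 0 := by linear_combination q1*hx0 - q0*hx1
    have hd' : ((p0-p2)+a*(q0-q2)) * (p0*q1 - p1*q0) = 0 := by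
      linear_combination p0*hx1 - p1*hx0
    have hq2 : q2 = q0 := by
      rcases mul_eq_zero.mp hc' with h | h
      · linarith
      · exact absurd h hdet
    have hp2 : p2 = p0 := by
      rcases mul_eq_zero.mp hd' with h | h
      · linear_combination -h - a*hq2
      · exact absurd h hdet
    have h0' : 2*p0 + a*q0 = 0 := by
      have h : q0 * (2*p0 + a*q0) = 0 := by linear_combination h00
      rcases mul_eq_zero.mp h with h | h
      · exact absurd h hq
      · exact h
    have sp' : p0+p1+p0+p3 = 2-a := by linear_combination sp - hp2
    have sq' : q0+q1+q0+q3 = 2 := by linear_combination sq - hq2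
    have h4 : 4*q0 = 4 := by
      linear_combination 2*e0 + 2*e3 - 2*q0*sp' - a*q0*sq' - (q1+q3-2*q0)*h0'
    have hq0 : q0 = 1 := by omega
    subst hq0
    have hab : a = 2*(-p0) := by linarith
    exact Or.inr ⟨q1, -p0, hab, by ring, rfl, by linear_combination e0 - q1*hab, rfl,
      by linarith, hq2, by linear_combination sp' - e0 + (q1 - 1)*hab, by linarith⟩

private lemma check (a : ℤ) (form : (ℤ × ℤ) → (ℤ × ℤ) → ℤ)
    (A : ZMod 4 → ℤ × ℤ) (v0 v1 v2 v3 : ℤ × ℤ)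
    (h0 : A 0 = v0) (h1 : A 1 = v1) (h2 : A 2 = v2) (h3 : A 3 = v3)
    (f01 : form v0 v1 = 1) (f12 : form v1 v2 = 1) (f23 : form v2 v3 = 1) (f30 : form v3 v0 = 1)
    (f02 : form v0 v2 = 0) (f13 : form v1 v3 = 0)
    (fs : v0 + v1 + v2 + v3 = (2 - a, 2)) :
    (∀ i : ZMod 4, form (A i) (A (i + 1)) = 1) ∧
      form (A 0) (A 2) = 0 ∧ form (A 1) (A 3) = 0 ∧
      A 0 + A 1 + A 2 + A 3 = (2 - a, 2) := by
  refine ⟨fun i => ?_, ?_, ?_, ?_⟩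
  · rcases h4z i with rfl | rfl | rfl | rfl <;>
      simp only [za01, za11, za21, za31, h0, h1, h2, h3] <;>
      first | exact f01 | exact f12 | exact f23 | exact f30
  · rw [h0, h2]; exact f02
  · rw [h1, h3]; exact f13
  · rw [h0, h1, h2, h3]; exact fs

private lemma rev_gen (a : ℤ) (form : (ℤ × ℤ) → (ℤ × ℤ) → ℤ)
    (hform : ∀ u v : ℤ × ℤ, form u v = u.1 * v.2 + u.2 * v.1 + a * u.2 * v.2)
    (A : ZMod 4 → ℤ × ℤ) (r : ZMod 4) (v0 v1 v2 v3 : ℤ × ℤ)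
    (h0 : A r = v0) (h1 : A (r+1) = v1) (h2 : A (r+2) = v2) (h3 : A (r+3) = v3)
    (f01 : form v0 v1 = 1) (f12 : form v1 v2 = 1) (f23 : form v2 v3 = 1) (f30 : form v3 v0 = 1)
    (f02 : form v0 v2 = 0) (f13 : form v1 v3 = 0)
    (fs : v0 + v1 + v2 + v3 = (2 - a, 2)) :
    (∀ i : ZMod 4, form (A i) (A (i + 1)) = 1) ∧
      form (A 0) (A 2) = 0 ∧ form (A 1) (A 3) = 0 ∧
      A 0 + A 1 + A 2 + A 3 = (2 - a, 2) := by
  have hsymm : ∀ u v, form u v = form v u := fun u v => by rw [hform, hform]; ring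
  rcases h4z r with rfl | rfl | rfl | rfl <;>
    simp only [za01, za02, za03, za11, za12, za13, za21, za22, za23, za31, za32, za33,
      zero_add, add_zero] at h0 h1 h2 h3
  · exact check a form A v0 v1 v2 v3 h0 h1 h2 h3 f01 f12 f23 f30 f02 f13 fs
  · exact check a form A v3 v0 v1 v2 h3 h0 h1 h2 f30 f01 f12 f23 (hsymm v1 v3 ▸ f13)
      (hsymm v0 v2 ▸ f02) (by linear_combination (norm := module) fs)
  · exact check a form A v2 v3 v0 v1 h2 h3 h0 h1 f23 f30 f01 f12 (hsymm v0 v2 ▸ f02)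
      (hsymm v1 v3 ▸ f13) (by linear_combination (norm := module) fs)
  · exact check a form A v1 v2 v3 v0 h1 h2 h3 h0 f12 f23 f30 f01 f13
      (hsymm v0 v2 ▸ f02) (by linear_combination (norm := module) fs)

set_option maxHeartbeats 1000000 in
private lemma fwd_main (a : ℤ)
    (form : (ℤ × ℤ) → (ℤ × ℤ) → ℤ)
    (hform : ∀ u v : ℤ × ℤ, form u v = u.1 * v.2 + u.2 * v.1 + a * u.2 * v.2)
    (A : ZMod 4 → ℤ × ℤ) :
    ((∀ i : ZMod 4, form (A i) (A (i + 1)) = 1) ∧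
      form (A 0) (A 2) = 0 ∧ form (A 1) (A 3) = 0 ∧
      A 0 + A 1 + A 2 + A 3 = (2 - a, 2)) →
    (∃ (r : ZMod 4) (σ : Bool),
      (∃ s : ℤ, ∀ j : ZMod 4,
        A (r + (if σ then j else -j)) =
          if j = 0 then ((1 : ℤ), (0 : ℤ))
          else if j = 1 then (s, 1)
          else if j = 2 then (1, 0)
          else (-(a + s), 1)) ∨
      (∃ s b : ℤ, a = 2 * b ∧ ∀ j : ZMod 4,
        A (r + (if σ then j else -j)) =
          if j = 0 then (-b, (1 : ℤ))
          else if j = 1 then ((1, 0) + s • (-b, (1 : ℤ)))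
          else if j = 2 then (-b, 1)
          else ((1, 0) - s • (-b, (1 : ℤ))))) := by
  intro h
  obtain ⟨hnb, h02, h13, hsum⟩ := h
  have e0 := hnb 0
  have e1 := hnb 1
  have e2 := hnb 2
  have e3 := hnb 3
  rw [za01] at e0
  rw [za11] at e1
  rw [za21] at e2
  rw [za31] at e3
  have c0 : (A 0).1*(A 1).2 + (A 0).2*(A 1).1 + a*(A 0).2*(A 1).2 = 1 := by
    rw [← hform]; exact e0
  have c1 : (A 1).1*(A 2).2 + (A 1).2*(A 2).1 + a*(A 1).2*(A 2).2 = 1 := by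
    rw [← hform]; exact e1
  have c2 : (A 2).1*(A 3).2 + (A 2).2*(A 3).1 + a*(A 2).2*(A 3).2 = 1 := by
    rw [← hform]; exact e2
  have c3 : (A 3).1*(A 0).2 + (A 3).2*(A 0).1 + a*(A 3).2*(A 0).2 = 1 := by
    rw [← hform]; exact e3
  have c02 : (A 0).1*(A 2).2 + (A 0).2*(A 2).1 + a*(A 0).2*(A 2).2 = 0 := by
    rw [← hform]; exact h02
  have c13 : (A 1).1*(A 3).2 + (A 1).2*(A 3).1 + a*(A 1).2*(A 3).2 = 0 := by
    rw [← hform]; exact h13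
  have csp : (A 0).1 + (A 1).1 + (A 2).1 + (A 3).1 = 2 - a := by
    have := congrArg Prod.fst hsum
    simpa [Prod.fst_add] using this
  have csq : (A 0).2 + (A 1).2 + (A 2).2 + (A 3).2 = 2 := by
    have := congrArg Prod.snd hsum
    simpa [Prod.snd_add] using this
  have h20 : form (A 2) (A 0) = 0 := by rw [hform]; linear_combination c02
  have h31 : form (A 3) (A 1) = 0 := by rw [hform]; linear_combination c13
  have G1 := gram3 a form hform (A 0) (A 1) (A 2)
  have G2 := gram3 a form hform (A 1) (A 2) (A 3)
  have G3 := gram3 a form hform (A 2) (A 3) (A 0)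
  have G4 := gram3 a form hform (A 3) (A 0) (A 1)
  rw [e0, e1, h02] at G1
  rw [e1, e2, h13] at G2
  rw [e2, e3, h20] at G3
  rw [e3, e0, h31] at G4
  have hS := sumsq a form hform (A 0) (A 1) (A 2) (A 3)
  rw [hsum, e0, e1, e2, e3, h02, h13] at hS
  have hK : form ((2 - a : ℤ), (2:ℤ)) ((2 - a : ℤ), (2:ℤ)) = 8 := by rw [hform]; ring
  rw [hK] at hS
  set α := form (A 0) (A 0) with hαd
  set β := form (A 1) (A 1) with hβd
  set γ := form (A 2) (A 2) with hγd
  set δ := form (A 3) (A 3) with hδd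
  have K1 : α*β*γ = α + γ := by linear_combination G1
  have K2 : β*γ*δ = β + δ := by linear_combination G2
  have K3 : γ*δ*α = γ + α := by linear_combination G3
  have K4 : δ*α*β = δ + β := by linear_combination G4
  have KS : α + β + γ + δ = 0 := by linear_combination hS
  have hcase : (α = 0 ∧ γ = 0) ∨ (β = 0 ∧ δ = 0) := by
    by_cases hα : α = 0
    · exact Or.inl ⟨hα, by linear_combination -K3 + γ*δ*hα - hα⟩
    by_cases hβ : β = 0
    · exact Or.inr ⟨hβ, by linear_combination -K4 + δ*α*hβ - hβ⟩
    exfalso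
    have hγ : γ ≠ 0 := fun h => hα (by linear_combination -K1 + α*β*h - h)
    have hδ : δ ≠ 0 := fun h => hβ (by linear_combination -K2 + β*γ*h - h)
    have h1 : α*γ*(β - δ) = 0 := by linear_combination K1 - K3
    have h2 : β*δ*(γ - α) = 0 := by linear_combination K2 - K4
    have hβδ : β = δ := by
      rcases mul_eq_zero.mp h1 with h | h
      · rcases mul_eq_zero.mp h with h | h
        · exact absurd h hα
        · exact absurd h hγ
      · linarith
    have hγα : γ = α := by
      rcases mul_eq_zero.mp h2 with h | h
      · rcases mul_eq_zero.mp h with h | h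
        · exact absurd h hβ
        · exact absurd h hδ
      · linarith
    have hβα : β = -α := by linarith
    have hz : α*(α^2+2) = 0 := by linear_combination -K1 + α*γ*hβα - (α^2+1)*hγα
    rcases mul_eq_zero.mp hz with h | h
    · exact hα h
    · nlinarith [sq_nonneg α]
  rcases hcase with ⟨hα, hγ⟩ | ⟨hβ, hδ⟩
  · have h00c : (A 0).1*(A 0).2 + (A 0).2*(A 0).1 + a*(A 0).2*(A 0).2 = 0 := by
      rw [← hform]; exact hα
    rcases int_key a (A 0).1 (A 0).2 (A 1).1 (A 1).2 (A 2).1 (A 2).2 (A 3).1 (A 3).2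
        c0 c1 c3 c02 h00c csp csq with
      ⟨s, hp0, hq0, hp1, hq1, hp2, hq2, hp3, hq3⟩ |
      ⟨s, b, hab, hp0, hq0, hp1, hq1, hp2, hq2, hp3, hq3⟩
    · refine ⟨0, true, Or.inl ⟨s, fun j => ?_⟩⟩
      rcases h4z j with rfl | rfl | rfl | rfl <;>
        simp only [eq_self_iff_true, if_true, if_false, Bool.false_eq_true, ze10, ze20, ze21, ze30, ze31, ze32, add_zero, zero_add, za01, za02, za03] <;>
        exact Prod.ext (by assumption) (by assumption)
    · refine ⟨0, true, Or.inr ⟨s, b, hab, fun j => ?_⟩⟩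
      rcases h4z j with rfl | rfl | rfl | rfl <;>
        simp only [eq_self_iff_true, if_true, if_false, Bool.false_eq_true, ze10, ze20, ze21, ze30, ze31, ze32, add_zero, zero_add, za01, za02, za03, smul1, smul2] <;>
        exact Prod.ext (by assumption) (by assumption)
  · have h00c : (A 1).1*(A 1).2 + (A 1).2*(A 1).1 + a*(A 1).2*(A 1).2 = 0 := by
      rw [← hform]; exact hβ
    have csp' : (A 1).1 + (A 2).1 + (A 3).1 + (A 0).1 = 2 - a := by linarith
    have csq' : (A 1).2 + (A 2).2 + (A 3).2 + (A 0).2 = 2 := by linarith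
    rcases int_key a (A 1).1 (A 1).2 (A 2).1 (A 2).2 (A 3).1 (A 3).2 (A 0).1 (A 0).2
        c1 c2 c0 c13 h00c csp' csq' with
      ⟨s, hp0, hq0, hp1, hq1, hp2, hq2, hp3, hq3⟩ |
      ⟨s, b, hab, hp0, hq0, hp1, hq1, hp2, hq2, hp3, hq3⟩
    · refine ⟨1, true, Or.inl ⟨s, fun j => ?_⟩⟩
      rcases h4z j with rfl | rfl | rfl | rfl <;>
        simp only [eq_self_iff_true, if_true, if_false, Bool.false_eq_true, ze10, ze20, ze21, ze30, ze31, ze32, add_zero, zero_add, za11, za12, za13] <;>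
        exact Prod.ext (by assumption) (by assumption)
    · refine ⟨1, true, Or.inr ⟨s, b, hab, fun j => ?_⟩⟩
      rcases h4z j with rfl | rfl | rfl | rfl <;>
        simp only [eq_self_iff_true, if_true, if_false, Bool.false_eq_true, ze10, ze20, ze21, ze30, ze31, ze32, add_zero, zero_add, za11, za12, za13, smul1, smul2] <;>
        exact Prod.ext (by assumption) (by assumption)

set_option maxHeartbeats 1000000 in
private lemma rev_main (a : ℤ)
    (form : (ℤ × ℤ) → (ℤ × ℤ) → ℤ)
    (hform : ∀ u v : ℤ × ℤ, form u v = u.1 * v.2 + u.2 * v.1 + a * u.2 * v.2)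
    (A : ZMod 4 → ℤ × ℤ) :
    (∃ (r : ZMod 4) (σ : Bool),
      (∃ s : ℤ, ∀ j : ZMod 4,
        A (r + (if σ then j else -j)) =
          if j = 0 then ((1 : ℤ), (0 : ℤ))
          else if j = 1 then (s, 1)
          else if j = 2 then (1, 0)
          else (-(a + s), 1)) ∨
      (∃ s b : ℤ, a = 2 * b ∧ ∀ j : ZMod 4,
        A (r + (if σ then j else -j)) =
          if j = 0 then (-b, (1 : ℤ))
          else if j = 1 then ((1, 0) + s • (-b, (1 : ℤ)))
          else if j = 2 then (-b, 1)
          else ((1, 0) - s • (-b, (1 : ℤ))))) →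
    ((∀ i : ZMod 4, form (A i) (A (i + 1)) = 1) ∧
      form (A 0) (A 2) = 0 ∧ form (A 1) (A 3) = 0 ∧
      A 0 + A 1 + A 2 + A 3 = (2 - a, 2)) := by
  intro h
  obtain ⟨r, σ, hc⟩ := h
  rcases hc with ⟨s, hA⟩ | ⟨s, b, hab, hA⟩
  · cases σ
    · -- reversed order
      have h0 := hA 0
      have h1 := hA 3
      have h2 := hA 2
      have h3 := hA 1
      simp only [eq_self_iff_true, if_true, if_false, Bool.false_eq_true, ze10, ze20, ze21, ze30, ze31, ze32, neg_zero, add_zero, zn1, zn2, zn3] at h0 h1 h2 h3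
      exact rev_gen a form hform A r _ _ _ _ h0 h1 h2 h3
        (by rw [hform]; norm_num) (by rw [hform]; norm_num; try ring)
        (by rw [hform]; norm_num) (by rw [hform]; norm_num)
        (by rw [hform]; norm_num) (by rw [hform]; norm_num; try ring)
        (by refine Prod.ext ?_ ?_ <;> simp <;> ring)
    · have h0 := hA 0
      have h1 := hA 1
      have h2 := hA 2
      have h3 := hA 3
      simp only [eq_self_iff_true, if_true, if_false, Bool.false_eq_true, ze10, ze20, ze21, ze30, ze31, ze32, add_zero] at h0 h1 h2 h3
      exact rev_gen a form hform A r _ _ _ _ h0 h1 h2 h3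
        (by rw [hform]; norm_num) (by rw [hform]; norm_num)
        (by rw [hform]; norm_num) (by rw [hform]; norm_num)
        (by rw [hform]; norm_num) (by rw [hform]; norm_num; try ring)
        (by refine Prod.ext ?_ ?_ <;> simp <;> ring)
  · subst hab
    cases σ
    · have h0 := hA 0
      have h1 := hA 3
      have h2 := hA 2
      have h3 := hA 1
      simp only [eq_self_iff_true, if_true, if_false, Bool.false_eq_true, ze10, ze20, ze21, ze30, ze31, ze32, neg_zero, add_zero, zn1, zn2, zn3, smul1, smul2] at h0 h1 h2 h3
      exact rev_gen (2*b) form hform A r _ _ _ _ h0 h1 h2 h3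
        (by rw [hform]; norm_num; try ring) (by rw [hform]; norm_num; try ring)
        (by rw [hform]; norm_num; try ring) (by rw [hform]; norm_num; try ring)
        (by rw [hform]; norm_num; try ring) (by rw [hform]; norm_num; try ring)
        (by refine Prod.ext ?_ ?_ <;> simp <;> ring)
    · have h0 := hA 0
      have h1 := hA 1
      have h2 := hA 2
      have h3 := hA 3
      simp only [eq_self_iff_true, if_true, if_false, Bool.false_eq_true, ze10, ze20, ze21, ze30, ze31, ze32, add_zero, smul1, smul2] at h0 h1 h2 h3
      exact rev_gen (2*b) form hform A r _ _ _ _ h0 h1 h2 h3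
        (by rw [hform]; norm_num; try ring) (by rw [hform]; norm_num; try ring)
        (by rw [hform]; norm_num; try ring) (by rw [hform]; norm_num; try ring)
        (by rw [hform]; norm_num; try ring) (by rw [hform]; norm_num; try ring)
        (by refine Prod.ext ?_ ?_ <;> simp <;> ring)

/-- (Classification of toric systems on Hirzebruch surfaces.)
Model `Pic(𝔽_a) = ℤ × ℤ`, where `(p, q)` stands for `p·P + q·Q`, with intersection form
`⟨(p₁,q₁),(p₂,q₂)⟩ = p₁q₂ + p₂q₁ + a·q₁q₂` and anticanonical class `-K = (2-a, 2)`.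
A quadruple `A : ZMod 4 → ℤ × ℤ` is a toric system iff, after a cyclic rotation of the
indices and possibly a reversal of their order, it equals
(i) `(P, sP + Q, P, -(a+s)P + Q)` for some `s ∈ ℤ`, or
(ii) `a` even and `(F, P + s·F, F, P - s·F)` with `F = -(a/2)P + Q`, for some `s ∈ ℤ`. -/
theorem hirzebruch_toric_system_classification
    (a : ℤ) (ha : 0 ≤ a)
    (form : (ℤ × ℤ) → (ℤ × ℤ) → ℤ)
    (hform : ∀ u v : ℤ × ℤ, form u v = u.1 * v.2 + u.2 * v.1 + a * u.2 * v.2)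
    (A : ZMod 4 → ℤ × ℤ) :
    ((∀ i : ZMod 4, form (A i) (A (i + 1)) = 1) ∧
      form (A 0) (A 2) = 0 ∧ form (A 1) (A 3) = 0 ∧
      A 0 + A 1 + A 2 + A 3 = (2 - a, 2)) ↔
    (∃ (r : ZMod 4) (σ : Bool),
      (∃ s : ℤ, ∀ j : ZMod 4,
        A (r + (if σ then j else -j)) =
          if j = 0 then ((1 : ℤ), (0 : ℤ))
          else if j = 1 then (s, 1)
          else if j = 2 then (1, 0)
          else (-(a + s), 1)) ∨
      (∃ s b : ℤ, a = 2 * b ∧ ∀ j : ZMod 4,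
        A (r + (if σ then j else -j)) =
          if j = 0 then (-b, (1 : ℤ))
          else if j = 1 then ((1, 0) + s • (-b, (1 : ℤ)))
          else if j = 2 then (-b, 1)
          else ((1, 0) - s • (-b, (1 : ℤ))))) :=
  ⟨fwd_main a form hform A, rev_main a form hform A⟩
end

section
/- Let l : ZMod n → ℤ² be toric fan data with self-intersection numbers a_i. (1) (Blow-up) For any i ∈ ZMod n, the family of n + 1 vectors obtained by inserting the vector l_i + l_{i+1} between l_i and l_{i+1} is again toric fan data, and its sequence of self-intersection numbers is obtained from (a_1, …, a_n) by replacing a_i, a_{i+1} with a_i − 1, −1, a_{i+1} − 1. (2) (Blow-down) If n ≥ 4 and a_i = −1 for some i, then the family of n − 1 vectors obtained by deleting l_i is again toric fan data, and its self-intersection numbers are a_{i−1} + 1 and a_{i+1} + 1 at the two former neighbors of i, and a_j for all other j. -/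
lemma span_char {u v : ℤ × ℤ} (h : det2 u v = 1) (w : ℤ × ℤ) :
    (∃ α β : ℤ, 0 ≤ α ∧ 0 ≤ β ∧ w = α • u + β • v) ↔ 0 ≤ det2 w v ∧ 0 ≤ det2 u w := by
  simp only [det2] at h ⊢
  constructor
  · rintro ⟨α, β, hα, hβ, hw⟩
    have h1 := congrArg Prod.fst hw
    have h2 := congrArg Prod.snd hw
    simp only [Prod.fst_add, Prod.snd_add, Prod.smul_fst, Prod.smul_snd, smul_eq_mul] at h1 h2
    constructor
    · have : w.1 * v.2 - w.2 * v.1 = α := by rw [h1, h2]; linear_combination α * h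
      omega
    · have : u.1 * w.2 - u.2 * w.1 = β := by rw [h1, h2]; linear_combination β * h
      omega
  · rintro ⟨h1, h2⟩
    refine ⟨w.1 * v.2 - w.2 * v.1, u.1 * w.2 - u.2 * w.1, h1, h2, ?_⟩
    apply Prod.ext <;>
      simp only [Prod.fst_add, Prod.snd_add, Prod.smul_fst, Prod.smul_snd, smul_eq_mul]
    · linear_combination (-w.1) * h
    · linear_combination (-w.2) * h

lemma det2_one_left_ne {u v : ℤ × ℤ} (h : det2 u v = 1) : u ≠ 0 := by
  rintro rfl; simp [det2] at h

lemma det2_one_right_ne {u v : ℤ × ℤ} (h : det2 u v = 1) : v ≠ 0 := by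
  rintro rfl; simp [det2] at h

lemma smul_cancel' {c d : ℤ} {u : ℤ × ℤ} (hu : u ≠ 0) (h : c • u = d • u) : c = d := by
  have h' : (c - d) • u = 0 := by rw [sub_smul, h, sub_self]
  rcases smul_eq_zero.mp h' with h'' | h''
  · omega
  · exact absurd h'' hu

lemma coeff_unique {x y u : ℤ × ℤ} {c d : ℤ}
    (hu : u ≠ 0) (h1 : x + c • u + y = 0) (h2 : x + d • u + y = 0) : c = d := by
  apply smul_cancel' hu
  rw [← sub_eq_zero]
  have h3 : (x + c • u + y) - (x + d • u + y) = 0 := by rw [h1, h2, sub_self]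
  have h4 : c • u - d • u = (x + c • u + y) - (x + d • u + y) := by abel
  rw [h4, h3]

lemma fan_det_neg {n : ℕ} {l : ZMod n → ℤ × ℤ} (hl : IsToricFanData n l) :
    ∀ s k : ZMod n, k ≠ s → k ≠ s + 1 →
      det2 (l k) (l (s + 1)) < 0 ∨ det2 (l s) (l k) < 0 := by
  intro s k h1 h2
  by_contra h
  push_neg at h
  exact hl.2 s k h1 h2 ((span_char (hl.1 s) (l k)).mpr ⟨h.1, h.2⟩)

lemma blowup_part (n : ℕ) (hn : 3 ≤ n) [NeZero n]
    (l : ZMod n → ℤ × ℤ) (hl : IsToricFanData n l)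
    (a : ZMod n → ℤ)
    (ha : ∀ i : ZMod n, l (i - 1) + a i • l i + l (i + 1) = 0)
    (i : ZMod n) (l' : ZMod (n + 1) → ℤ × ℤ)
    (hf : ∀ j : ZMod (n + 1), l' j =
        if j.val ≤ i.val then l ((j.val : ZMod n))
        else if j.val = i.val + 1 then l i + l (i + 1)
        else l (((j.val - 1 : ℕ) : ZMod n))) :
    IsToricFanData (n + 1) l' ∧
      ∀ a' : ZMod (n + 1) → ℤ,
        (∀ j : ZMod (n + 1), l' (j - 1) + a' j • l' j + l' (j + 1) = 0) →
        a' ((i.val : ZMod (n + 1))) = a i - 1 ∧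
        a' ((i.val : ZMod (n + 1)) + 1) = -1 ∧
        a' ((i.val : ZMod (n + 1)) + 2) = a (i + 1) - 1 ∧
        ∀ j : ZMod (n + 1),
          j ≠ (i.val : ZMod (n + 1)) → j ≠ (i.val : ZMod (n + 1)) + 1 →
          j ≠ (i.val : ZMod (n + 1)) + 2 →
          a' j = a (if j.val ≤ i.val then ((j.val : ZMod n))
                    else (((j.val - 1 : ℕ) : ZMod n))) := by
  have hl1 := hl.1
  have hldet := fan_det_neg hl
  have hm : i.val < n := ZMod.val_lt i
  have hcvi : ((i.val : ℕ) : ZMod n) = i := ZMod.natCast_rightInverse i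
  obtain ⟨g, hgapp⟩ : ∃ g : ZMod (n + 1) → ZMod n, ∀ q : ZMod (n + 1),
      g q = if q.val ≤ i.val then ((q.val : ZMod n)) else (((q.val - 1 : ℕ) : ZMod n)) :=
    ⟨_, fun q => rfl⟩
  set r : ZMod (n + 1) := ((i.val + 1 : ℕ) : ZMod (n + 1)) with hrdef
  have hrval : r.val = i.val + 1 := ZMod.val_cast_of_lt (by omega)
  have hvadd : ∀ q : ZMod (n + 1), (q + 1).val = (q.val + 1) % (n + 1) := by
    intro q
    have h1 : ((1 : ℕ) : ZMod (n + 1)) = 1 := by norm_cast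
    rw [← h1, ZMod.val_add, ZMod.val_cast_of_lt (show 1 < n + 1 by omega)]
  have hvinj : ∀ q q' : ZMod (n + 1), q.val = q'.val → q = q' := by
    intro q q' h
    have e1 : ((q.val : ℕ) : ZMod (n + 1)) = q := ZMod.natCast_rightInverse q
    have e2 : ((q'.val : ℕ) : ZMod (n + 1)) = q' := ZMod.natCast_rightInverse q'
    rw [← e1, ← e2, h]
  have hqvne : ∀ q : ZMod (n + 1), q ≠ r → q.val ≠ i.val + 1 := by
    intro q hq hval
    exact hq (hvinj q r (by rw [hval, hrval]))
  have hT1 : ∀ q : ZMod (n + 1), q ≠ r → l' q = l (g q) := by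
    intro q hq
    rw [hf q, hgapp q, apply_ite l]
    split_ifs with h1 h2
    · rfl
    · exact absurd h2 (hqvne q hq)
    · rfl
  have hT2 : l' r = l i + l (i + 1) := by
    rw [hf r, hrval, if_neg (by omega), if_pos rfl]
  have hcne : ∀ b c : ℕ, b < n + 1 → c < n + 1 → b ≠ c →
      ((b : ZMod (n + 1))) ≠ ((c : ZMod (n + 1))) := by
    intro b c hb hc hbc hh
    have := congrArg ZMod.val hh
    rw [ZMod.val_cast_of_lt hb, ZMod.val_cast_of_lt hc] at this
    exact hbc this
  have hone : (1 : ZMod (n + 1)) ≠ 0 := by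
    have := hcne 1 0 (by omega) (by omega) (by omega)
    simpa using this
  have htwo : (2 : ZMod (n + 1)) ≠ 0 := by
    have := hcne 2 0 (by omega) (by omega) (by omega)
    simpa using this
  have hr1r : r + 1 ≠ r := fun hh => hone (by linear_combination hh)
  have hr2r : r + 1 + 1 ≠ r := fun hh => htwo (by linear_combination hh)
  have hrm1r : r - 1 ≠ r := fun hh => hone (by linear_combination -hh)
  have hrm2r : r - 2 ≠ r := fun hh => htwo (by linear_combination -hh)
  have hgrm1 : g (r - 1) = i := by
    have hv : (r - 1).val = i.val := by
      have e : r - 1 = ((i.val : ℕ) : ZMod (n + 1)) := by rw [hrdef]; push_cast; ring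
      rw [e, ZMod.val_cast_of_lt (by omega)]
    rw [hgapp, hv, if_pos (le_refl _), hcvi]
  have hgr : g r = i := by
    rw [hgapp, hrval, if_neg (by omega), show i.val + 1 - 1 = i.val from by omega, hcvi]
  have hgr1 : g (r + 1) = i + 1 := by
    have hv : (r + 1).val = (i.val + 2) % (n + 1) := by rw [hvadd, hrval]
    rcases Nat.lt_or_ge (i.val + 1) n with h | h
    · rw [hgapp, hv, Nat.mod_eq_of_lt (by omega), if_neg (by omega),
        show i.val + 2 - 1 = i.val + 1 from by omega]
      push_cast
      rw [hcvi]
    · have hn2 : i.val + 1 = n := by omega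
      have h0 : ((i.val + 1 : ℕ) : ZMod n) = 0 := by rw [hn2]; exact ZMod.natCast_self n
      push_cast at h0
      rw [hgapp, hv, show i.val + 2 = n + 1 from by omega, Nat.mod_self, if_pos (by omega),
        Nat.cast_zero]
      linear_combination hcvi - h0
  have hT3 : ∀ q : ZMod (n + 1), q ≠ r → q + 1 ≠ r → g (q + 1) = g q + 1 := by
    intro q hq hq1
    have ht : q.val < n + 1 := ZMod.val_lt q
    have htm : q.val ≠ i.val + 1 := hqvne q hq
    have ht'm : (q + 1).val ≠ i.val + 1 := hqvne _ hq1
    rcases Nat.lt_or_ge q.val n with h | h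
    · have hv : (q + 1).val = q.val + 1 := by rw [hvadd, Nat.mod_eq_of_lt (by omega)]
      rcases Nat.lt_or_ge q.val i.val with h2 | h2
      · rw [hgapp, hgapp, hv, if_pos (by omega), if_pos (by omega)]
        push_cast; ring
      · have hne : q.val ≠ i.val := by
          intro hh; rw [hv, hh] at ht'm; exact ht'm rfl
        have h3 : i.val + 2 ≤ q.val := by omega
        rw [hgapp, hgapp, hv, if_neg (by omega), if_neg (by omega),
          show q.val + 1 - 1 = (q.val - 1) + 1 from by omega]
        push_cast; ring
    · have hqn : q.val = n := by omega
      have hv : (q + 1).val = 0 := by rw [hvadd, hqn, Nat.mod_self]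
      have hm2 : i.val + 2 ≤ n := by omega
      rw [hgapp, hgapp, hv, hqn, if_pos (by omega), if_neg (by omega), Nat.cast_zero]
      have e0 : ((n - 1 : ℕ) : ZMod n) + 1 = (((n - 1) + 1 : ℕ) : ZMod n) := by
        push_cast; ring
      rw [e0, show n - 1 + 1 = n from by omega, ZMod.natCast_self]
  have hT7 : ∀ q q' : ZMod (n + 1), q ≠ r → q' ≠ r → g q = g q' → q = q' := by
    intro q q' hq hq' hgg
    have h1 : q.val < n + 1 := ZMod.val_lt q
    have h2 : q'.val < n + 1 := ZMod.val_lt q'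
    have hm1 : q.val ≠ i.val + 1 := hqvne q hq
    have hm2 : q'.val ≠ i.val + 1 := hqvne q' hq'
    rw [hgapp, hgapp] at hgg
    apply hvinj
    rcases le_or_gt q.val i.val with ha1 | ha1 <;> rcases le_or_gt q'.val i.val with ha2 | ha2
    · rw [if_pos ha1, if_pos ha2] at hgg
      have := congrArg ZMod.val hgg
      rwa [ZMod.val_cast_of_lt (by omega), ZMod.val_cast_of_lt (by omega)] at this
    · rw [if_pos ha1, if_neg (by omega)] at hgg
      have := congrArg ZMod.val hgg
      rw [ZMod.val_cast_of_lt (by omega), ZMod.val_cast_of_lt (by omega)] at this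
      omega
    · rw [if_neg (by omega), if_pos ha2] at hgg
      have := congrArg ZMod.val hgg
      rw [ZMod.val_cast_of_lt (by omega), ZMod.val_cast_of_lt (by omega)] at this
      omega
    · rw [if_neg (by omega), if_neg (by omega)] at hgg
      have := congrArg ZMod.val hgg
      rw [ZMod.val_cast_of_lt (by omega), ZMod.val_cast_of_lt (by omega)] at this
      omega
  have hPQ : det2 (l i) (l (i + 1)) = 1 := hl1 i
  have hPQe : (l i).1 * (l (i + 1)).2 - (l i).2 * (l (i + 1)).1 = 1 := hPQ
  have hd1 : det2 (l i + l (i + 1)) (l i) = -1 := by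
    simp only [det2, Prod.fst_add, Prod.snd_add]; linear_combination - hPQe
  have hd2 : det2 (l (i + 1)) (l i + l (i + 1)) = -1 := by
    simp only [det2, Prod.fst_add, Prod.snd_add]; linear_combination - hPQe
  have hd3 : ∀ v : ℤ × ℤ, det2 v (l i + l (i + 1)) = det2 v (l i) + det2 v (l (i + 1)) := by
    intro v; simp only [det2, Prod.fst_add, Prod.snd_add]; ring
  have hd4 : ∀ v : ℤ × ℤ, det2 (l i + l (i + 1)) v = det2 (l i) v + det2 (l (i + 1)) v := by
    intro v; simp only [det2, Prod.fst_add, Prod.snd_add]; ring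
  have hdet' : ∀ q : ZMod (n + 1), det2 (l' q) (l' (q + 1)) = 1 := by
    intro q
    by_cases hq : q = r
    · rw [hq, hT2, hT1 (r + 1) hr1r, hgr1]
      simp only [det2, Prod.fst_add, Prod.snd_add]
      linear_combination hPQe
    · by_cases hq1 : q + 1 = r
      · rw [hT1 q hq, hq1, hT2, show q = r - 1 from eq_sub_of_add_eq hq1, hgrm1]
        simp only [det2, Prod.fst_add, Prod.snd_add]
        linear_combination hPQe
      · rw [hT1 q hq, hT1 (q + 1) hq1, hT3 q hq hq1]
        exact hl1 (g q)
  have hspan' : ∀ q k : ZMod (n + 1), k ≠ q → k ≠ q + 1 →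
      ¬∃ α β : ℤ, 0 ≤ α ∧ 0 ≤ β ∧ l' k = α • l' q + β • l' (q + 1) := by
    intro q k hkq hkq1 hex
    rw [span_char (hdet' q) (l' k)] at hex
    obtain ⟨hA, hB⟩ := hex
    by_cases hqr : q = r
    · rw [hqr] at hA hB
      have hkr : k ≠ r := by rw [← hqr]; exact hkq
      have hk1 : l' k = l (g k) := hT1 k hkr
      have hgk1 : g k ≠ i + 1 := by
        intro hh
        apply hkq1
        rw [hqr]
        exact hT7 k (r + 1) hkr hr1r (by rw [hh, hgr1])
      rw [hk1, hT2] at hB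
      rw [hk1, hT1 (r + 1) hr1r, hgr1] at hA
      by_cases hgki : g k = i
      · rw [hgki, hd1] at hB
        omega
      · rcases hldet i (g k) hgki hgk1 with hd | hd
        · linarith
        · rw [hd4] at hB
          linarith [det2_antisymm (l (i + 1)) (l (g k))]
    · by_cases hq1r : q + 1 = r
      · have hkr : k ≠ r := by rw [← hq1r]; exact hkq1
        have hk1 : l' k = l (g k) := hT1 k hkr
        have hqrm1 : q = r - 1 := eq_sub_of_add_eq hq1r
        have hlq : l' q = l i := by rw [hT1 q hqr, hqrm1, hgrm1]
        have hlq1 : l' (q + 1) = l i + l (i + 1) := by rw [hq1r, hT2]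
        rw [hk1, hlq1] at hA
        rw [hk1, hlq] at hB
        have hgki : g k ≠ i := by
          intro hh
          apply hkq
          rw [hqrm1]
          exact hT7 k (r - 1) hkr hrm1r (by rw [hh, hgrm1])
        by_cases hgk1 : g k = i + 1
        · rw [hgk1, hd2] at hA
          omega
        · rcases hldet i (g k) hgki hgk1 with hd | hd
          · rw [hd3] at hA
            linarith [det2_antisymm (l (g k)) (l i)]
          · linarith
      · have hgq1 : g (q + 1) = g q + 1 := hT3 q hqr hq1r
        have hlq : l' q = l (g q) := hT1 q hqr
        have hlq1 : l' (q + 1) = l (g q + 1) := by rw [hT1 (q + 1) hq1r, hgq1]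
        rw [hlq1] at hA
        rw [hlq] at hB
        by_cases hkr : k = r
        · rw [hkr, hT2] at hA hB
          by_cases hsi1 : g q + 1 = i
          · rw [hsi1, hd1] at hA
            omega
          · by_cases hsi2 : g q = i + 1
            · rw [hsi2, hd2] at hB
              omega
            · have hsi : g q ≠ i := by
                intro hh
                apply hq1r
                have e : q = r - 1 := hT7 q (r - 1) hqr hrm1r (by rw [hh, hgrm1])
                rw [e]; ring
              have hsi11 : g q + 1 ≠ i + 1 := by
                intro hh; exact hsi (by linear_combination hh)
              have h1 := hldet (g q) i (Ne.symm hsi) (Ne.symm hsi1)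
              have h2 := hldet (g q) (i + 1) (Ne.symm hsi2) (Ne.symm hsi11)
              have h3 := hldet i (g q) hsi hsi2
              have h4 := hldet i (g q + 1) hsi1 hsi11
              have hps : det2 (l (g q)) (l (g q + 1)) = 1 := hl1 (g q)
              have plucker : det2 (l i) (l (g q + 1)) * det2 (l (g q)) (l (i + 1))
                  - det2 (l (i + 1)) (l (g q + 1)) * det2 (l (g q)) (l i)
                  = det2 (l (g q)) (l (g q + 1)) * det2 (l i) (l (i + 1)) := by
                simp only [det2]; ring
              rw [hps, hPQ, one_mul] at plucker
              rw [hd4] at hA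
              rw [hd3] at hB
              rcases h1 with h1 | h1
              · rcases h2 with h2 | h2
                · linarith
                · nlinarith [mul_nonneg
                      (by linarith : (0:ℤ) ≤ det2 (l i) (l (g q + 1)) + det2 (l (i + 1)) (l (g q + 1)))
                      (by linarith : (0:ℤ) ≤ det2 (l (g q)) (l i)),
                    mul_nonneg
                      (by linarith : (0:ℤ) ≤ det2 (l (g q)) (l i) + det2 (l (g q)) (l (i + 1)))
                      (by linarith : (0:ℤ) ≤ -det2 (l i) (l (g q + 1)))]
              · rcases h3 with h3 | h3
                · linarith
                · linarith [det2_antisymm (l i) (l (g q))]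
        · have hk1 : l' k = l (g k) := hT1 k hkr
          rw [hk1] at hA hB
          have hgk1 : g k ≠ g q := fun hh => hkq (hT7 k q hkr hqr hh)
          have hgk2 : g k ≠ g q + 1 := by
            intro hh
            exact hkq1 (hT7 k (q + 1) hkr hq1r (by rw [hh, hgq1]))
          rcases hldet (g q) (g k) hgk1 hgk2 with hd | hd <;> linarith
  refine ⟨⟨hdet', hspan'⟩, ?_⟩
  intro a' ha'
  have hc0 : ((i.val : ℕ) : ZMod (n + 1)) = r - 1 := by rw [hrdef]; push_cast; ring
  have hQne : l (i + 1) ≠ 0 := det2_one_right_ne hPQ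
  have hPne : l i ≠ 0 := det2_one_left_ne hPQ
  have hRne : l i + l (i + 1) ≠ 0 := by
    apply det2_one_right_ne (u := l i)
    simp only [det2, Prod.fst_add, Prod.snd_add]
    linear_combination hPQe
  refine ⟨?_, ?_, ?_, ?_⟩
  · rw [hc0]
    have eq1 := ha' (r - 1)
    rw [show r - 1 - 1 = r - 2 from by ring] at eq1
    have hgrm2 : g (r - 2) = i - 1 := by
      have h1 : g (r - 1) = g (r - 2) + 1 := by
        have e := hT3 (r - 2) hrm2r (by rw [show r - 2 + 1 = r - 1 from by ring]; exact hrm1r)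
        rwa [show r - 2 + 1 = r - 1 from by ring] at e
      rw [hgrm1] at h1
      rw [eq_sub_of_add_eq h1.symm]
    rw [hT1 (r - 2) hrm2r, hgrm2, hT1 (r - 1) hrm1r, hgrm1,
      show r - 1 + 1 = r from by ring, hT2] at eq1
    have eq2 : l (i - 1) + (a i - 1) • l i + (l i + l (i + 1)) = 0 := by
      have e : l (i - 1) + (a i - 1) • l i + (l i + l (i + 1))
          = l (i - 1) + a i • l i + l (i + 1) := by
        rw [sub_smul, one_smul]; abel
      rw [e]; exact ha i
    exact coeff_unique hPne eq1 eq2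
  · rw [hc0, show r - 1 + 1 = r from by ring]
    have eq1 := ha' r
    rw [hT2, hT1 (r - 1) hrm1r, hgrm1, hT1 (r + 1) hr1r, hgr1] at eq1
    have eq2 : l i + (-1 : ℤ) • (l i + l (i + 1)) + l (i + 1) = 0 := by
      rw [neg_smul, one_smul]; abel
    exact coeff_unique hRne eq1 eq2
  · rw [hc0, show r - 1 + 2 = r + 1 from by ring]
    have eq1 := ha' (r + 1)
    rw [show r + 1 - 1 = r from by ring, hT2, hT1 (r + 1) hr1r, hgr1] at eq1
    have hr2 : l' (r + 1 + 1) = l (i + 1 + 1) := by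
      rw [hT1 _ hr2r, hT3 (r + 1) hr1r hr2r, hgr1]
    rw [hr2] at eq1
    have eq2 : l i + l (i + 1) + (a (i + 1) - 1) • l (i + 1) + l (i + 1 + 1) = 0 := by
      have e : l i + l (i + 1) + (a (i + 1) - 1) • l (i + 1) + l (i + 1 + 1)
          = l (i + 1 - 1) + a (i + 1) • l (i + 1) + l (i + 1 + 1) := by
        rw [sub_smul, one_smul, show i + 1 - 1 = i from by ring]; abel
      rw [e]; exact ha (i + 1)
    exact coeff_unique hQne eq1 eq2
  · intro j hj1 hj2 hj3
    rw [hc0] at hj1 hj2 hj3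
    have hjr : j ≠ r := by intro hh; apply hj2; rw [hh]; ring
    have hjm : j - 1 ≠ r := by intro hh; apply hj3; rw [eq_add_of_sub_eq hh]; ring
    have hjp : j + 1 ≠ r := by intro hh; exact hj1 (eq_sub_of_add_eq hh)
    have eq1 := ha' j
    have e1 : g j = g (j - 1) + 1 := by
      have e := hT3 (j - 1) hjm (by rw [show j - 1 + 1 = j from by ring]; exact hjr)
      rwa [show j - 1 + 1 = j from by ring] at e
    have e2 : g (j - 1) = g j - 1 := by rw [e1]; ring
    rw [hT1 j hjr, hT1 (j - 1) hjm, hT1 (j + 1) hjp, hT3 j hjr hjp, e2] at eq1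
    rw [← hgapp j]
    exact coeff_unique (det2_one_left_ne (hl1 (g j))) eq1 (ha (g j))

lemma blowdown_part (n : ℕ) (hn4 : 4 ≤ n) [NeZero n] [NeZero (n - 1)]
    (l : ZMod n → ℤ × ℤ) (hl : IsToricFanData n l)
    (a : ZMod n → ℤ)
    (ha : ∀ i : ZMod n, l (i - 1) + a i • l i + l (i + 1) = 0)
    (i : ZMod n) (hai : a i = -1) (l'' : ZMod (n - 1) → ℤ × ℤ)
    (hf : ∀ j : ZMod (n - 1), l'' j =
        if j.val < i.val then l ((j.val : ZMod n))
        else l (((j.val + 1 : ℕ) : ZMod n))) :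
    IsToricFanData (n - 1) l'' ∧
      ∀ a'' : ZMod (n - 1) → ℤ,
        (∀ j : ZMod (n - 1), l'' (j - 1) + a'' j • l'' j + l'' (j + 1) = 0) →
        ∀ j : ZMod n, j ≠ i →
          a'' (if j.val < i.val then ((j.val : ZMod (n - 1)))
               else (((j.val - 1 : ℕ) : ZMod (n - 1)))) =
            if j = i - 1 ∨ j = i + 1 then a j + 1 else a j := by
  have hl1 := hl.1
  have hldet := fan_det_neg hl
  have hm : i.val < n := ZMod.val_lt i
  have hcvi : ((i.val : ℕ) : ZMod n) = i := ZMod.natCast_rightInverse i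
  have hrel : l (i - 1) + l (i + 1) = l i := by
    have h := ha i
    rw [hai] at h
    have e : l (i - 1) + (-1 : ℤ) • l i + l (i + 1) = (l (i - 1) + l (i + 1)) - l i := by
      rw [neg_smul, one_smul]; abel
    rw [e, sub_eq_zero] at h
    exact h
  have hdet1 : det2 (l (i - 1)) (l (i + 1)) = 1 := by
    have h1 : det2 (l (i - 1)) (l (i - 1 + 1)) = 1 := hl1 (i - 1)
    rw [show i - 1 + 1 = i from by ring] at h1
    have e : l (i + 1) = l i - l (i - 1) := by rw [← hrel]; abel
    rw [e]
    simp only [det2, Prod.fst_sub, Prod.snd_sub] at h1 ⊢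
    linear_combination h1
  have hvadd : ∀ q : ZMod (n - 1), (q + 1).val = (q.val + 1) % (n - 1) := by
    intro q
    have h1 : ((1 : ℕ) : ZMod (n - 1)) = 1 := by norm_cast
    rw [← h1, ZMod.val_add, ZMod.val_cast_of_lt (show 1 < n - 1 by omega)]
  have hvinj : ∀ q q' : ZMod (n - 1), q.val = q'.val → q = q' := by
    intro q q' h
    have e1 : ((q.val : ℕ) : ZMod (n - 1)) = q := ZMod.natCast_rightInverse q
    have e2 : ((q'.val : ℕ) : ZMod (n - 1)) = q' := ZMod.natCast_rightInverse q'
    rw [← e1, ← e2, h]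
  have hvinjn : ∀ q q' : ZMod n, q.val = q'.val → q = q' := by
    intro q q' h
    have e1 : ((q.val : ℕ) : ZMod n) = q := ZMod.natCast_rightInverse q
    have e2 : ((q'.val : ℕ) : ZMod n) = q' := ZMod.natCast_rightInverse q'
    rw [← e1, ← e2, h]
  have hcnen : ∀ b c : ℕ, b < n → c < n → b ≠ c →
      ((b : ZMod n)) ≠ ((c : ZMod n)) := by
    intro b c hb hc hbc hh
    have := congrArg ZMod.val hh
    rw [ZMod.val_cast_of_lt hb, ZMod.val_cast_of_lt hc] at this
    exact hbc this
  have htwon : (2 : ZMod n) ≠ 0 := by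
    have := hcnen 2 0 (by omega) (by omega) (by omega)
    simpa using this
  have hneq2 : i - 1 ≠ i + 1 := fun hh => htwon (by linear_combination -hh)
  have hn10 : ((n - 1 : ℕ) : ZMod n) + 1 = 0 := by
    have e0 : ((n - 1 : ℕ) : ZMod n) + 1 = (((n - 1) + 1 : ℕ) : ZMod n) := by push_cast; ring
    rw [e0, show n - 1 + 1 = n from by omega, ZMod.natCast_self]
  have him : i.val ≠ 0 → i - 1 = ((i.val - 1 : ℕ) : ZMod n) := by
    intro h0
    have e : ((i.val - 1 : ℕ) : ZMod n) + 1 = i := by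
      have e0 : ((i.val - 1 : ℕ) : ZMod n) + 1 = (((i.val - 1) + 1 : ℕ) : ZMod n) := by
        push_cast; ring
      rw [e0, show i.val - 1 + 1 = i.val from by omega, hcvi]
    linear_combination - e
  have him0 : i.val = 0 → i - 1 = ((n - 1 : ℕ) : ZMod n) := by
    intro h0
    have e : i = 0 := by rw [← hcvi, h0, Nat.cast_zero]
    rw [e]
    linear_combination - hn10
  obtain ⟨s, hsapp⟩ : ∃ s : ZMod (n - 1) → ZMod n, ∀ q : ZMod (n - 1),
      s q = if q.val < i.val then ((q.val : ZMod n)) else (((q.val + 1 : ℕ) : ZMod n)) :=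
    ⟨_, fun q => rfl⟩
  have hS1 : ∀ q, l'' q = l (s q) := by
    intro q
    rw [hf q, hsapp q, apply_ite l]
  have hS2 : ∀ q, s q ≠ i := by
    intro q hh
    have hq : q.val < n - 1 := ZMod.val_lt q
    rw [hsapp] at hh
    split_ifs at hh with h1
    · have := congrArg ZMod.val hh
      rw [ZMod.val_cast_of_lt (by omega)] at this
      omega
    · have := congrArg ZMod.val hh
      rw [ZMod.val_cast_of_lt (by omega)] at this
      omega
  have hS4 : ∀ q q' : ZMod (n - 1), s q = s q' → q = q' := by
    intro q q' hgg
    have h1 : q.val < n - 1 := ZMod.val_lt q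
    have h2 : q'.val < n - 1 := ZMod.val_lt q'
    rw [hsapp, hsapp] at hgg
    apply hvinj
    rcases lt_or_ge q.val i.val with ha1 | ha1 <;> rcases lt_or_ge q'.val i.val with ha2 | ha2
    · rw [if_pos ha1, if_pos ha2] at hgg
      have := congrArg ZMod.val hgg
      rwa [ZMod.val_cast_of_lt (by omega), ZMod.val_cast_of_lt (by omega)] at this
    · rw [if_pos ha1, if_neg (by omega)] at hgg
      have := congrArg ZMod.val hgg
      rw [ZMod.val_cast_of_lt (by omega), ZMod.val_cast_of_lt (by omega)] at this
      omega
    · rw [if_neg (by omega), if_pos ha2] at hgg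
      have := congrArg ZMod.val hgg
      rw [ZMod.val_cast_of_lt (by omega), ZMod.val_cast_of_lt (by omega)] at this
      omega
    · rw [if_neg (by omega), if_neg (by omega)] at hgg
      have := congrArg ZMod.val hgg
      rw [ZMod.val_cast_of_lt (by omega), ZMod.val_cast_of_lt (by omega)] at this
      omega
  have hS3 : ∀ q : ZMod (n - 1), (s q = i - 1 ∧ s (q + 1) = i + 1) ∨
      (s q ≠ i - 1 ∧ s (q + 1) = s q + 1) := by
    intro q
    have ht : q.val < n - 1 := ZMod.val_lt q
    rcases Nat.lt_or_ge (q.val + 1) (n - 1) with hlt | hge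
    · have hv : (q + 1).val = q.val + 1 := by rw [hvadd, Nat.mod_eq_of_lt hlt]
      rcases Nat.lt_trichotomy (q.val + 1) i.val with c1 | c1 | c1
      · right
        constructor
        · rw [hsapp, if_pos (by omega)]
          intro hh
          rw [him (by omega)] at hh
          have := congrArg ZMod.val hh
          rw [ZMod.val_cast_of_lt (by omega), ZMod.val_cast_of_lt (by omega)] at this
          omega
        · rw [hsapp, hsapp, hv, if_pos (by omega), if_pos (by omega)]
          push_cast; ring
      · left
        constructor
        · rw [hsapp, if_pos (by omega)]
          rw [him (by omega), show i.val - 1 = q.val from by omega]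
        · rw [hsapp, hv, if_neg (by omega), show q.val + 1 + 1 = i.val + 1 from by omega]
          push_cast
          rw [hcvi]
      · right
        constructor
        · rw [hsapp, if_neg (by omega)]
          intro hh
          rcases Nat.eq_zero_or_pos i.val with h0 | h0
          · rw [him0 h0] at hh
            have := congrArg ZMod.val hh
            rw [ZMod.val_cast_of_lt (by omega), ZMod.val_cast_of_lt (by omega)] at this
            omega
          · rw [him (by omega)] at hh
            have := congrArg ZMod.val hh
            rw [ZMod.val_cast_of_lt (by omega), ZMod.val_cast_of_lt (by omega)] at this
            omega
        · rw [hsapp, hsapp, hv, if_neg (by omega), if_neg (by omega)]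
          push_cast; ring
    · have htop : q.val = n - 2 := by omega
      have hv : (q + 1).val = 0 := by
        rw [hvadd, show q.val + 1 = n - 1 from by omega, Nat.mod_self]
      by_cases hc1 : i.val = n - 1
      · left
        constructor
        · rw [hsapp, if_pos (by omega), him (by omega),
            show i.val - 1 = q.val from by omega]
        · rw [hsapp, hv, if_pos (by omega), Nat.cast_zero]
          have e : i = ((n - 1 : ℕ) : ZMod n) := by rw [← hcvi, hc1]
          rw [e]
          linear_combination - hn10
      · by_cases hc0 : i.val = 0
        · left
          constructor
          · rw [hsapp, if_neg (by omega), show q.val + 1 = n - 1 from by omega,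
              him0 hc0]
          · rw [hsapp, hv, if_neg (by omega)]
            have e : i = 0 := by rw [← hcvi, hc0, Nat.cast_zero]
            rw [e]
            norm_num
        · right
          constructor
          · rw [hsapp, if_neg (by omega), show q.val + 1 = n - 1 from by omega]
            intro hh
            rw [him (by omega)] at hh
            have := congrArg ZMod.val hh
            rw [ZMod.val_cast_of_lt (by omega), ZMod.val_cast_of_lt (by omega)] at this
            omega
          · rw [hsapp, hsapp, hv, if_pos (by omega), if_neg (by omega),
              show q.val + 1 = n - 1 from by omega, Nat.cast_zero]
            linear_combination - hn10
  have hdet'' : ∀ q : ZMod (n - 1), det2 (l'' q) (l'' (q + 1)) = 1 := by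
    intro q
    rcases hS3 q with ⟨h1, h2⟩ | ⟨h1, h2⟩
    · rw [hS1 q, hS1 (q + 1), h1, h2]
      exact hdet1
    · rw [hS1 q, hS1 (q + 1), h2]
      exact hl1 (s q)
  have hspan'' : ∀ q k : ZMod (n - 1), k ≠ q → k ≠ q + 1 →
      ¬∃ α β : ℤ, 0 ≤ α ∧ 0 ≤ β ∧ l'' k = α • l'' q + β • l'' (q + 1) := by
    intro q k hkq hkq1 hex
    rw [span_char (hdet'' q) (l'' k)] at hex
    obtain ⟨hA, hB⟩ := hex
    have hsk1 : s k ≠ s q := fun hh => hkq (hS4 _ _ hh)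
    have hsk2 : s k ≠ s (q + 1) := fun hh => hkq1 (hS4 _ _ hh)
    rw [hS1 k] at hA hB
    rcases hS3 q with ⟨h1, h2⟩ | ⟨h1, h2⟩
    · rw [hS1 (q + 1), h2] at hA
      rw [hS1 q, h1] at hB
      have hki1 : s k ≠ i - 1 := by rw [← h1]; exact hsk1
      have hki2 : s k ≠ i + 1 := by rw [← h2]; exact hsk2
      have hki : s k ≠ i := hS2 k
      rcases hldet (i - 1) (s k) hki1 (by rw [show i - 1 + 1 = i from by ring]; exact hki)
        with hd | hd
      · rw [show i - 1 + 1 = i from by ring] at hd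
        rcases hldet i (s k) hki hki2 with hd2 | hd2
        · linarith
        · linarith [det2_antisymm (l (s k)) (l i)]
      · linarith
    · rw [hS1 (q + 1), h2] at hA
      rw [hS1 q] at hB
      rcases hldet (s q) (s k) hsk1 (by rw [← h2]; exact hsk2) with hd | hd
      · linarith
      · linarith
  refine ⟨⟨hdet'', hspan''⟩, ?_⟩
  intro a'' ha'' j hji
  set p : ZMod (n - 1) := if j.val < i.val then ((j.val : ZMod (n - 1)))
      else (((j.val - 1 : ℕ) : ZMod (n - 1))) with hpdef
  have hjv : j.val ≠ i.val := fun hh => hji (hvinjn j i hh)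
  have hjvn : j.val < n := ZMod.val_lt j
  have hsp : s p = j := by
    rcases Nat.lt_or_ge j.val i.val with hc | hc
    · have hp : p = ((j.val : ℕ) : ZMod (n - 1)) := by rw [hpdef, if_pos hc]
      have hpv : p.val = j.val := by rw [hp, ZMod.val_cast_of_lt (by omega)]
      rw [hsapp, hpv, if_pos hc]
      exact ZMod.natCast_rightInverse j
    · have hc' : i.val < j.val := by omega
      have hp : p = ((j.val - 1 : ℕ) : ZMod (n - 1)) := by rw [hpdef, if_neg (by omega)]
      have hpv : p.val = j.val - 1 := by rw [hp, ZMod.val_cast_of_lt (by omega)]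
      rw [hsapp, hpv, if_neg (by omega), show j.val - 1 + 1 = j.val from by omega]
      exact ZMod.natCast_rightInverse j
  have hp1 : l'' p = l j := by rw [hS1, hsp]
  have hpm1 : p - 1 + 1 = p := by ring
  have hp2 : l'' (p + 1) = if j = i - 1 then l (i + 1) else l (j + 1) := by
    rcases hS3 p with ⟨h1, h2⟩ | ⟨h1, h2⟩
    · have hj : j = i - 1 := by rw [← hsp]; exact h1
      rw [hS1, h2, if_pos hj]
    · have hj : j ≠ i - 1 := by rw [← hsp]; exact h1
      rw [hS1, h2, hsp, if_neg hj]
  have hp3 : l'' (p - 1) = if j = i + 1 then l (i - 1) else l (j - 1) := by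
    rcases hS3 (p - 1) with ⟨h1, h2⟩ | ⟨h1, h2⟩
    · rw [hpm1] at h2
      have hj : j = i + 1 := by rw [← hsp]; exact h2
      rw [hS1, h1, if_pos hj]
    · rw [hpm1] at h2
      have e : s (p - 1) = j - 1 := by rw [← hsp, h2]; ring
      have hj : j ≠ i + 1 := by
        intro hh
        apply hS2 (p - 1)
        rw [e, hh]
        ring
      rw [hS1, e, if_neg hj]
  have eqp := ha'' p
  rw [hp1, hp2, hp3] at eqp
  by_cases hj1 : j = i - 1
  · rw [if_pos (Or.inl hj1)]
    have hj2 : j ≠ i + 1 := by rw [hj1]; exact hneq2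
    rw [if_pos hj1, if_neg hj2] at eqp
    have eq2 : l (j - 1) + (a j + 1) • l j + l (i + 1) = 0 := by
      have e : l (j - 1) + (a j + 1) • l j + l (i + 1)
          = (l (j - 1) + a j • l j + l (j + 1)) + (l j + l (i + 1) - l (j + 1)) := by
        rw [add_smul, one_smul]; abel
      rw [e, ha j, zero_add, hj1, show i - 1 + 1 = i from by ring, hrel, sub_self]
    exact coeff_unique (det2_one_left_ne (hl1 j)) eqp eq2
  · by_cases hj2 : j = i + 1
    · rw [if_pos (Or.inr hj2)]
      rw [if_neg hj1, if_pos hj2] at eqp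
      have eq2 : l (i - 1) + (a j + 1) • l j + l (j + 1) = 0 := by
        have e : l (i - 1) + (a j + 1) • l j + l (j + 1)
            = (l (j - 1) + a j • l j + l (j + 1)) + (l (i - 1) + l j - l (j - 1)) := by
          rw [add_smul, one_smul]; abel
        rw [e, ha j, zero_add, hj2, show i + 1 - 1 = i from by ring, hrel, sub_self]
      exact coeff_unique (det2_one_left_ne (hl1 j)) eqp eq2
    · rw [if_neg (not_or.mpr ⟨hj1, hj2⟩)]
      rw [if_neg hj1, if_neg hj2] at eqp
      exact coeff_unique (det2_one_left_ne (hl1 j)) eqp (ha j)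

/-- (Equivariant blow-up and blow-down of toric fan data.)
(1) Inserting `l i + l (i+1)` between positions `i` and `i+1` yields toric fan data on
`ZMod (n+1)`, whose self-intersection numbers replace `a i, a (i+1)` by
`a i - 1, -1, a (i+1) - 1` and keep all other values.
(2) If `n ≥ 4` and `a i = -1`, deleting `l i` yields toric fan data on `ZMod (n-1)`,
whose self-intersection numbers at the two former neighbors of `i` are
`a (i-1) + 1` and `a (i+1) + 1`, and `a j` at all other positions. -/
theorem toric_fan_data_blowup_blowdown
    (n : ℕ) (hn : 3 ≤ n) [NeZero n] [NeZero (n - 1)]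
    (l : ZMod n → ℤ × ℤ) (hl : IsToricFanData n l)
    (a : ZMod n → ℤ)
    (ha : ∀ i : ZMod n, l (i - 1) + a i • l i + l (i + 1) = 0) :
    (∀ i : ZMod n, ∀ l' : ZMod (n + 1) → ℤ × ℤ,
      (∀ j : ZMod (n + 1), l' j =
        if j.val ≤ i.val then l ((j.val : ZMod n))
        else if j.val = i.val + 1 then l i + l (i + 1)
        else l (((j.val - 1 : ℕ) : ZMod n))) →
      IsToricFanData (n + 1) l' ∧
      ∀ a' : ZMod (n + 1) → ℤ,
        (∀ j : ZMod (n + 1), l' (j - 1) + a' j • l' j + l' (j + 1) = 0) →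
        a' ((i.val : ZMod (n + 1))) = a i - 1 ∧
        a' ((i.val : ZMod (n + 1)) + 1) = -1 ∧
        a' ((i.val : ZMod (n + 1)) + 2) = a (i + 1) - 1 ∧
        ∀ j : ZMod (n + 1),
          j ≠ (i.val : ZMod (n + 1)) → j ≠ (i.val : ZMod (n + 1)) + 1 →
          j ≠ (i.val : ZMod (n + 1)) + 2 →
          a' j = a (if j.val ≤ i.val then ((j.val : ZMod n))
                    else (((j.val - 1 : ℕ) : ZMod n)))) ∧
    (4 ≤ n → ∀ i : ZMod n, a i = -1 → ∀ l'' : ZMod (n - 1) → ℤ × ℤ,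
      (∀ j : ZMod (n - 1), l'' j =
        if j.val < i.val then l ((j.val : ZMod n))
        else l (((j.val + 1 : ℕ) : ZMod n))) →
      IsToricFanData (n - 1) l'' ∧
      ∀ a'' : ZMod (n - 1) → ℤ,
        (∀ j : ZMod (n - 1), l'' (j - 1) + a'' j • l'' j + l'' (j + 1) = 0) →
        ∀ j : ZMod n, j ≠ i →
          a'' (if j.val < i.val then ((j.val : ZMod (n - 1)))
               else (((j.val - 1 : ℕ) : ZMod (n - 1)))) =
            if j = i - 1 ∨ j = i + 1 then a j + 1 else a j) := by
  constructor
  · intro i l' hf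
    exact blowup_part n hn l hl a ha i l' hf
  · intro h4 i hai l'' hf
    exact blowdown_part n h4 l hl a ha i hai l'' hf
end

section
/- Let l : ZMod n → ℤ² be toric fan data with self-intersection numbers a_i. (1) If n = 3, then a_1 = a_2 = a_3 = 1 and l_1 + l_2 + l_3 = 0 (the fan of ℙ²). (2) If n = 4, then there exists i ∈ ZMod 4 such that a_i = a_{i+2} = 0, a_{i+1} = −a_{i+3}, and l_{i+1} + l_{i+3} = 0 (the fan of the Hirzebruch surface 𝔽_{|a_{i+1}|}). -/
/-- (The minimal toric surfaces.)  For toric fan data with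
self-intersection numbers `a i`:
(1) if `n = 3` then all `a i = 1` and `∑ l i = 0` (the fan of `ℙ²`);
(2) if `n = 4` then there is `i` with `a i = a (i+2) = 0`, `a (i+1) = -a (i+3)` and
`l (i+1) + l (i+3) = 0` (the fan of the Hirzebruch surface `𝔽_{|a (i+1)|}`). -/
theorem toric_fan_data_minimal_models
    (n : ℕ) (hn : 3 ≤ n) [NeZero n]
    (l : ZMod n → ℤ × ℤ) (hl : IsToricFanData n l)
    (a : ZMod n → ℤ)
    (ha : ∀ i : ZMod n, l (i - 1) + a i • l i + l (i + 1) = 0) :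
    (n = 3 → (∀ i : ZMod n, a i = 1) ∧ ∑ i : ZMod n, l i = 0) ∧
    (n = 4 → ∃ i : ZMod n, a i = 0 ∧ a (i + 2) = 0 ∧ a (i + 1) = -a (i + 3) ∧
      l (i + 1) + l (i + 3) = 0) := by
  obtain ⟨hdet, -⟩ := hl
  constructor
  · rintro rfl
    have h0 := ha 0; have h1 := ha 1; have h2 := ha 2
    have d0 := hdet 0; have d1 := hdet 1; have d2 := hdet 2
    rw [show (0:ZMod 3) - 1 = 2 from by decide, show (0:ZMod 3) + 1 = 1 from by decide] at h0
    rw [show (1:ZMod 3) - 1 = 0 from by decide, show (1:ZMod 3) + 1 = 2 from by decide] at h1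
    rw [show (2:ZMod 3) - 1 = 1 from by decide, show (2:ZMod 3) + 1 = 0 from by decide] at h2
    rw [show (0:ZMod 3) + 1 = 1 from by decide] at d0
    rw [show (1:ZMod 3) + 1 = 2 from by decide] at d1
    rw [show (2:ZMod 3) + 1 = 0 from by decide] at d2
    simp only [det2] at d0 d1 d2
    have h0f : (l 2).1 + a 0 * (l 0).1 + (l 1).1 = 0 := by
      have := congrArg Prod.fst h0; simpa using this
    have h0s : (l 2).2 + a 0 * (l 0).2 + (l 1).2 = 0 := by
      have := congrArg Prod.snd h0; simpa using this
    have h1f : (l 0).1 + a 1 * (l 1).1 + (l 2).1 = 0 := by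
      have := congrArg Prod.fst h1; simpa using this
    have h1s : (l 0).2 + a 1 * (l 1).2 + (l 2).2 = 0 := by
      have := congrArg Prod.snd h1; simpa using this
    have h2f : (l 1).1 + a 2 * (l 2).1 + (l 0).1 = 0 := by
      have := congrArg Prod.fst h2; simpa using this
    have h2s : (l 1).2 + a 2 * (l 2).2 + (l 0).2 = 0 := by
      have := congrArg Prod.snd h2; simpa using this
    have ea0 : a 0 = 1 := by
      linear_combination (l 1).2 * h0f - (l 1).1 * h0s + d1 - a 0 * d0
    have ea1 : a 1 = 1 := by
      linear_combination (l 2).2 * h1f - (l 2).1 * h1s + d2 - a 1 * d1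
    have ea2 : a 2 = 1 := by
      linear_combination (l 0).2 * h2f - (l 0).1 * h2s + d0 - a 2 * d2
    constructor
    · intro i
      fin_cases i
      · exact ea0
      · exact ea1
      · exact ea2
    · have hsum : ∑ i : ZMod 3, l i = l 0 + l 1 + l 2 := by
        show ∑ i : Fin 3, l i = _
        exact Fin.sum_univ_three l
      rw [hsum]
      rw [ea0, one_smul] at h0
      rw [← h0]; abel
  · rintro rfl
    have h0 := ha 0; have h1 := ha 1; have h2 := ha 2; have h3 := ha 3
    have d0 := hdet 0; have d1 := hdet 1; have d2 := hdet 2; have d3 := hdet 3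
    rw [show (0:ZMod 4) - 1 = 3 from by decide, show (0:ZMod 4) + 1 = 1 from by decide] at h0
    rw [show (1:ZMod 4) - 1 = 0 from by decide, show (1:ZMod 4) + 1 = 2 from by decide] at h1
    rw [show (2:ZMod 4) - 1 = 1 from by decide, show (2:ZMod 4) + 1 = 3 from by decide] at h2
    rw [show (3:ZMod 4) - 1 = 2 from by decide, show (3:ZMod 4) + 1 = 0 from by decide] at h3
    rw [show (0:ZMod 4) + 1 = 1 from by decide] at d0
    rw [show (1:ZMod 4) + 1 = 2 from by decide] at d1
    rw [show (2:ZMod 4) + 1 = 3 from by decide] at d2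
    rw [show (3:ZMod 4) + 1 = 0 from by decide] at d3
    simp only [det2] at d0 d1 d2 d3
    have h0f : (l 3).1 + a 0 * (l 0).1 + (l 1).1 = 0 := by
      have := congrArg Prod.fst h0; simpa using this
    have h0s : (l 3).2 + a 0 * (l 0).2 + (l 1).2 = 0 := by
      have := congrArg Prod.snd h0; simpa using this
    have h1f : (l 0).1 + a 1 * (l 1).1 + (l 2).1 = 0 := by
      have := congrArg Prod.fst h1; simpa using this
    have h1s : (l 0).2 + a 1 * (l 1).2 + (l 2).2 = 0 := by
      have := congrArg Prod.snd h1; simpa using this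
    have h2f : (l 1).1 + a 2 * (l 2).1 + (l 3).1 = 0 := by
      have := congrArg Prod.fst h2; simpa using this
    have h2s : (l 1).2 + a 2 * (l 2).2 + (l 3).2 = 0 := by
      have := congrArg Prod.snd h2; simpa using this
    have h3f : (l 2).1 + a 3 * (l 3).1 + (l 0).1 = 0 := by
      have := congrArg Prod.fst h3; simpa using this
    have h3s : (l 2).2 + a 3 * (l 3).2 + (l 0).2 = 0 := by
      have := congrArg Prod.snd h3; simpa using this
    have hA : a 2 = -a 0 := by
      linear_combination (l 1).2 * h0f - (l 1).2 * h2f - (l 1).1 * h0s + (l 1).1 * h2s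
        - a 2 * d1 - a 0 * d0
    have hB : a 3 = -a 1 := by
      linear_combination (l 2).2 * h1f - (l 2).2 * h3f - (l 2).1 * h1s + (l 2).1 * h3s
        - a 3 * d2 - a 1 * d1
    by_cases hz : a 0 = 0
    · refine ⟨0, hz, ?_, ?_, ?_⟩
      · rw [show (0:ZMod 4) + 2 = 2 from by decide, hA, hz, neg_zero]
      · rw [show (0:ZMod 4) + 1 = 1 from by decide, show (0:ZMod 4) + 3 = 3 from by decide, hB]
        ring
      · rw [show (0:ZMod 4) + 1 = 1 from by decide, show (0:ZMod 4) + 3 = 3 from by decide]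
        have : l 1 + l 3 = l 3 + a 0 • l 0 + l 1 := by rw [hz, zero_smul]; abel
        rw [this, h0]
    · -- a 0 ≠ 0, so l 0 + l 2 = 0 and a 1 = a 3 = 0
      have ef : (l 0).1 + (l 2).1 = 0 := by
        have key : a 0 * ((l 0).1 + (l 2).1) = 0 := by
          linear_combination h0f - h2f + hA * (l 2).1
        rcases mul_eq_zero.mp key with h | h
        · exact absurd h hz
        · exact h
      have es : (l 0).2 + (l 2).2 = 0 := by
        have key : a 0 * ((l 0).2 + (l 2).2) = 0 := by
          linear_combination h0s - h2s + hA * (l 2).2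
        rcases mul_eq_zero.mp key with h | h
        · exact absurd h hz
        · exact h
      have ea1 : a 1 = 0 := by
        linear_combination (l 2).2 * h1f - (l 2).2 * ef - (l 2).1 * h1s + (l 2).1 * es - a 1 * d1
      refine ⟨1, ea1, ?_, ?_, ?_⟩
      · rw [show (1:ZMod 4) + 2 = 3 from by decide, hB, ea1, neg_zero]
      · rw [show (1:ZMod 4) + 1 = 2 from by decide, show (1:ZMod 4) + 3 = 0 from by decide, hA]
      · rw [show (1:ZMod 4) + 1 = 2 from by decide, show (1:ZMod 4) + 3 = 0 from by decide]
        refine Prod.ext ?_ ?_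
        · simpa using by linarith [ef]
        · simpa using by linarith [es]
end
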